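/- arXiv:2512.10295 — 10 statements merged into one kernel-verified Lean document; each statement's English description precedes it below -/
import Mathlib

section
/- Lower bound for solutions: let c < 0, let f : V → ℝ, and let u : V → ℝ satisfy L u = f e^{2u} − c on V. If x₀ ∈ V is a point where u attains its minimum over V, then f(x₀) < 0, and for every x ∈ V one has u(x) ≥ (1/2) · log(−c / ‖f‖_∞). -/
/-- Lower bound for solutions: at a minimum point `x₀` of a solution `u`
one has `f x₀ < 0`, and `u ≥ (1/2) log(-c / ‖f‖_∞)` everywhere. -/
theorem stmt_3 {V : Type*} [Fintype V] [Nonempty V] [DecidableEq V]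
    (μ : V → ℝ) (hμ : ∀ x, 0 < μ x)
    (W : V → V → ℝ) (hWsym : ∀ x y, W x y = W y x)
    (hWpos : ∀ x y, x ≠ y → 0 < W x y)
    (L : (V → ℝ) → (V → ℝ))
    (hL : ∀ u x, L u x = (1 / μ x) * ∑ y ∈ Finset.univ.erase x, W x y * (u x - u y))
    (c : ℝ) (hc : c < 0) (f : V → ℝ) (u : V → ℝ)
    (hu : ∀ x, L u x = f x * Real.exp (2 * u x) - c)
    (x₀ : V) (hmin : ∀ x, u x₀ ≤ u x) :
    f x₀ < 0 ∧ ∀ x, u x ≥ (1 / 2) *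
      Real.log (-c / Finset.univ.sup' Finset.univ_nonempty (fun x => |f x|)) := by
  have hL0 : L u x₀ ≤ 0 := by
    rw [hL]
    apply mul_nonpos_of_nonneg_of_nonpos
    · have := hμ x₀
      positivity
    · apply Finset.sum_nonpos
      intro y hy
      have hne : x₀ ≠ y := (Finset.mem_erase.mp hy).1.symm
      have := hWpos x₀ y hne
      nlinarith [hmin y]
  have hkey : f x₀ * Real.exp (2 * u x₀) ≤ c := by
    have := hu x₀; linarith
  have hexp : (0:ℝ) < Real.exp (2 * u x₀) := Real.exp_pos _
  have hf0 : f x₀ < 0 := by nlinarith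
  refine ⟨hf0, ?_⟩
  set M := Finset.univ.sup' Finset.univ_nonempty (fun x => |f x|) with hM
  have hMge : -f x₀ ≤ M := by
    have h1 : |f x₀| ≤ M := Finset.le_sup' (fun x => |f x|) (Finset.mem_univ x₀)
    have := abs_nonneg (f x₀)
    rw [abs_of_neg hf0] at h1
    linarith
  have hMpos : 0 < M := lt_of_lt_of_le (by linarith) hMge
  have h2 : -c ≤ M * Real.exp (2 * u x₀) := by nlinarith
  have h3 : -c / M ≤ Real.exp (2 * u x₀) := (div_le_iff₀ hMpos).mpr (by linarith [h2, mul_comm M (Real.exp (2 * u x₀))])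
  have h4 : Real.log (-c / M) ≤ 2 * u x₀ := by
    calc Real.log (-c / M) ≤ Real.log (Real.exp (2 * u x₀)) :=
          Real.log_le_log (div_pos (by linarith) hMpos) h3
      _ = 2 * u x₀ := Real.log_exp _
  intro x
  have := hmin x
  simp only [ge_iff_le]
  linarith
end

section
/- For every function u : V → ℝ one has ∫_V e^{−2u} · L u dμ ≤ 0, i.e., Σ_{x∈V} μ(x) · e^{−2u(x)} · L u(x) ≤ 0. -/
private lemma erase_to_ite {V : Type*} [Fintype V] [DecidableEq V] (x : V) (f : V → ℝ) :
    ∑ y ∈ Finset.univ.erase x, f y = ∑ y : V, if y = x then 0 else f y := by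
  rw [← Finset.filter_ne' Finset.univ x, Finset.sum_filter]
  refine Finset.sum_congr rfl fun y _ => ?_
  by_cases h : y = x <;> simp [h, Ne, eq_comm]

private lemma swap_sum {V : Type*} [Fintype V] [DecidableEq V] (g : V → V → ℝ) :
    ∑ x : V, ∑ y ∈ Finset.univ.erase x, g x y
      = ∑ x : V, ∑ y ∈ Finset.univ.erase x, g y x := by
  have h1 : ∑ x : V, ∑ y ∈ Finset.univ.erase x, g x y
      = ∑ x : V, ∑ y : V, if y = x then 0 else g x y := by
    exact Finset.sum_congr rfl fun x _ => erase_to_ite x _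
  have h2 : ∑ x : V, ∑ y ∈ Finset.univ.erase x, g y x
      = ∑ x : V, ∑ y : V, if y = x then 0 else g y x := by
    exact Finset.sum_congr rfl fun x _ => erase_to_ite x _
  rw [h1, h2, Finset.sum_comm]
  refine Finset.sum_congr rfl fun x _ => Finset.sum_congr rfl fun y _ => ?_
  by_cases h : x = y <;> simp [h, eq_comm]

private lemma exp_factor_nonpos (a b : ℝ) :
    (Real.exp (-2 * a) - Real.exp (-2 * b)) * (a - b) ≤ 0 := by
  rcases le_total a b with h | h
  · apply mul_nonpos_of_nonneg_of_nonpos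
    · have : Real.exp (-2 * b) ≤ Real.exp (-2 * a) := Real.exp_le_exp.2 (by linarith)
      linarith
    · linarith
  · apply mul_nonpos_of_nonpos_of_nonneg
    · have : Real.exp (-2 * a) ≤ Real.exp (-2 * b) := Real.exp_le_exp.2 (by linarith)
      linarith
    · linarith

/-- For every `u : V → ℝ`, `∫_V e^{-2u} · L u dμ ≤ 0`. -/
theorem stmt_5 {V : Type*} [Fintype V] [Nonempty V] [DecidableEq V]
    (μ : V → ℝ) (hμ : ∀ x, 0 < μ x)
    (W : V → V → ℝ) (hWsym : ∀ x y, W x y = W y x)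
    (hWpos : ∀ x y, x ≠ y → 0 < W x y)
    (L : (V → ℝ) → (V → ℝ))
    (hL : ∀ u x, L u x = (1 / μ x) * ∑ y ∈ Finset.univ.erase x, W x y * (u x - u y)) :
    ∀ u : V → ℝ, ∑ x : V, μ x * (Real.exp (-2 * u x) * L u x) ≤ 0 := by
  intro u
  set g : V → V → ℝ := fun x y => Real.exp (-2 * u x) * (W x y * (u x - u y)) with hg
  have hstep : ∀ x, μ x * (Real.exp (-2 * u x) * L u x)
      = ∑ y ∈ Finset.univ.erase x, g x y := by
    intro x
    have hne : μ x ≠ 0 := (hμ x).ne'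
    have key : μ x * (Real.exp (-2 * u x) * L u x)
        = Real.exp (-2 * u x) * ∑ y ∈ Finset.univ.erase x, W x y * (u x - u y) := by
      rw [hL]
      field_simp
    rw [key, Finset.mul_sum]
  rw [Finset.sum_congr rfl fun x _ => hstep x]
  set S := ∑ x : V, ∑ y ∈ Finset.univ.erase x, g x y with hS
  have h2 : S + S ≤ 0 := by
    have hswap := swap_sum g
    calc S + S = ∑ x : V, ∑ y ∈ Finset.univ.erase x, (g x y + g y x) := by
          rw [hS]
          nth_rewrite 2 [hswap]
          rw [← Finset.sum_add_distrib]
          exact Finset.sum_congr rfl fun x _ => (Finset.sum_add_distrib).symm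
      _ ≤ 0 := by
          apply Finset.sum_nonpos
          intro x _
          apply Finset.sum_nonpos
          intro y hy
          have hxy : y ≠ x := Finset.ne_of_mem_erase hy
          have hgsum : g x y + g y x
              = W x y * ((Real.exp (-2 * u x) - Real.exp (-2 * u y)) * (u x - u y)) := by
            simp only [hg]
            rw [hWsym y x]
            ring
          rw [hgsum]
          exact mul_nonpos_of_nonneg_of_nonpos (hWpos x y (Ne.symm hxy)).le
            (exp_factor_nonpos (u x) (u y))
  linarith
end

section
/- Necessary condition for solvability: let c < 0 and let f : V → ℝ. If there exists u : V → ℝ with L u = f e^{2u} − c on V, then ∫_V f dμ < 0. -/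
/-- Necessary condition for solvability: if `L u = f e^{2u} - c` has a solution
with `c < 0`, then `∫_V f dμ < 0`. -/
theorem stmt_6 {V : Type*} [Fintype V] [Nonempty V] [DecidableEq V]
    (μ : V → ℝ) (hμ : ∀ x, 0 < μ x)
    (W : V → V → ℝ) (hWsym : ∀ x y, W x y = W y x)
    (hWpos : ∀ x y, x ≠ y → 0 < W x y)
    (L : (V → ℝ) → (V → ℝ))
    (hL : ∀ u x, L u x = (1 / μ x) * ∑ y ∈ Finset.univ.erase x, W x y * (u x - u y))
    (c : ℝ) (hc : c < 0) (f : V → ℝ)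
    (hsol : ∃ u : V → ℝ, ∀ x, L u x = f x * Real.exp (2 * u x) - c) :
    ∑ x : V, f x * μ x < 0 := by
  obtain ⟨u, hu⟩ := hsol
  set φ : V → ℝ := fun x => Real.exp (-(2 * u x)) with hφ
  have hφpos : ∀ x, 0 < φ x := fun x => Real.exp_pos _
  -- f x = φ x * (L u x + c)
  have hf : ∀ x, f x = φ x * (L u x + c) := by
    intro x
    have h := hu x
    have hexp : Real.exp (2 * u x) ≠ 0 := (Real.exp_pos _).ne'
    have hone : φ x * Real.exp (2 * u x) = 1 := by
      rw [hφ]; simp [← Real.exp_add]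
    have h2 : φ x * (L u x + c) = f x * (φ x * Real.exp (2 * u x)) := by
      rw [h]; ring
    rw [h2, hone, mul_one]
  -- the Dirichlet-type sum
  have hLsum : ∀ x, L u x * μ x = ∑ y : V, W x y * (u x - u y) := by
    intro x
    rw [hL]
    have hx : W x x * (u x - u x) = 0 := by ring
    rw [← Finset.add_sum_erase Finset.univ (fun y => W x y * (u x - u y))
      (Finset.mem_univ x), hx, zero_add]
    rw [one_div, mul_comm (μ x)⁻¹ _, mul_assoc, inv_mul_cancel₀ (hμ x).ne', mul_one]
  set T : ℝ := ∑ x : V, φ x * ∑ y : V, W x y * (u x - u y) with hT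
  have hTle : T ≤ 0 := by
    have h2T : 2 * T = ∑ x : V, ∑ y : V, W x y * (u x - u y) * (φ x - φ y) := by
      have hT' : T = ∑ x : V, ∑ y : V, φ x * (W x y * (u x - u y)) := by
        rw [hT]
        exact Finset.sum_congr rfl fun x _ => by rw [Finset.mul_sum]
      have hswap : T = ∑ x : V, ∑ y : V, φ y * (W x y * (u y - u x)) := by
        rw [hT', Finset.sum_comm]
        apply Finset.sum_congr rfl
        intro a _
        apply Finset.sum_congr rfl
        intro b _
        rw [hWsym b a]
      calc 2 * T = (∑ x : V, ∑ y : V, φ x * (W x y * (u x - u y)))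
          + ∑ x : V, ∑ y : V, φ y * (W x y * (u y - u x)) := by
            rw [← hT', ← hswap]; ring
        _ = ∑ x : V, ∑ y : V, W x y * (u x - u y) * (φ x - φ y) := by
            rw [← Finset.sum_add_distrib]
            apply Finset.sum_congr rfl
            intro x _
            rw [← Finset.sum_add_distrib]
            exact Finset.sum_congr rfl fun y _ => by ring
    have hnonpos : ∀ x y : V, W x y * (u x - u y) * (φ x - φ y) ≤ 0 := by
      intro x y
      rcases eq_or_ne x y with rfl | hxy
      · simp
      · have hW := (hWpos x y hxy).le
        have : (u x - u y) * (φ x - φ y) ≤ 0 := by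
          rcases le_total (u x) (u y) with h | h
          · have : φ y ≤ φ x := Real.exp_le_exp.mpr (by linarith)
            nlinarith
          · have : φ x ≤ φ y := Real.exp_le_exp.mpr (by linarith)
            nlinarith
        calc W x y * (u x - u y) * (φ x - φ y) = W x y * ((u x - u y) * (φ x - φ y)) := by ring
        _ ≤ 0 := mul_nonpos_of_nonneg_of_nonpos hW this
    have : 2 * T ≤ 0 := by
      rw [h2T]
      apply Finset.sum_nonpos
      intro x _
      exact Finset.sum_nonpos fun y _ => hnonpos x y
    linarith
  have key : ∑ x : V, f x * μ x = T + c * ∑ x : V, φ x * μ x := by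
    rw [hT, Finset.mul_sum, ← Finset.sum_add_distrib]
    apply Finset.sum_congr rfl
    intro x _
    rw [hf x, ← hLsum x]
    ring
  have hpos : 0 < ∑ x : V, φ x * μ x :=
    Finset.sum_pos (fun x _ => mul_pos (hφpos x) (hμ x)) Finset.univ_nonempty
  nlinarith
end

section
/- Let c < 0 and let f : V → ℝ. If u : V → ℝ satisfies L u = f e^{2u} − c on V, then ∫_V f e^{2u} dμ = c · Σ_{x∈V} μ(x) < 0; in particular min_{x∈V} f(x) < 0. -/
/-- If `u` solves `L u = f e^{2u} - c` with `c < 0`, then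
`∫_V f e^{2u} dμ = c · Σ μ < 0`; in particular `min f < 0`. -/
theorem stmt_7 {V : Type*} [Fintype V] [Nonempty V] [DecidableEq V]
    (μ : V → ℝ) (hμ : ∀ x, 0 < μ x)
    (W : V → V → ℝ) (hWsym : ∀ x y, W x y = W y x)
    (hWpos : ∀ x y, x ≠ y → 0 < W x y)
    (L : (V → ℝ) → (V → ℝ))
    (hL : ∀ u x, L u x = (1 / μ x) * ∑ y ∈ Finset.univ.erase x, W x y * (u x - u y))
    (c : ℝ) (hc : c < 0) (f : V → ℝ) (u : V → ℝ)
    (hu : ∀ x, L u x = f x * Real.exp (2 * u x) - c) :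
    (∑ x : V, f x * Real.exp (2 * u x) * μ x = c * ∑ x : V, μ x) ∧
    (∑ x : V, f x * Real.exp (2 * u x) * μ x < 0) ∧
    Finset.univ.inf' Finset.univ_nonempty f < 0 := by
  have hkey : ∑ x : V, μ x * L u x = 0 := by
    have h1 : ∀ x : V, μ x * L u x = ∑ y : V, W x y * (u x - u y) := by
      intro x
      rw [hL]
      have he : ∑ y ∈ Finset.univ.erase x, W x y * (u x - u y)
          = ∑ y : V, W x y * (u x - u y) :=
        Finset.sum_erase _ (by ring)
      rw [he]
      rw [← mul_assoc, mul_one_div, div_self (hμ x).ne', one_mul]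
    simp_rw [h1, mul_sub, Finset.sum_sub_distrib]
    have hA : ∑ x : V, ∑ y : V, W x y * u y = ∑ x : V, ∑ y : V, W x y * u x := by
      rw [Finset.sum_comm]
      exact Finset.sum_congr rfl fun a _ => Finset.sum_congr rfl fun b _ => by
        rw [hWsym]
    rw [hA, sub_self]
  have hsum : ∑ x : V, μ x * L u x
      = ∑ x : V, f x * Real.exp (2 * u x) * μ x - c * ∑ x : V, μ x := by
    simp_rw [hu, Finset.mul_sum]
    rw [← Finset.sum_sub_distrib]
    apply Finset.sum_congr rfl; intro x _; ring
  have heq : ∑ x : V, f x * Real.exp (2 * u x) * μ x = c * ∑ x : V, μ x := by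
    linarith [hkey, hsum]
  have hμpos : 0 < ∑ x : V, μ x :=
    Finset.sum_pos (fun x _ => hμ x) Finset.univ_nonempty
  have hneg : ∑ x : V, f x * Real.exp (2 * u x) * μ x < 0 := by
    rw [heq]; exact mul_neg_of_neg_of_pos hc hμpos
  refine ⟨heq, hneg, ?_⟩
  obtain ⟨x, -, hx⟩ := Finset.exists_lt_of_sum_lt (g := fun _ : V => (0:ℝ))
    (by simpa using hneg)
  have hfx : f x < 0 := by
    by_contra h
    push_neg at h
    have : 0 ≤ f x * Real.exp (2 * u x) * μ x :=
      mul_nonneg (mul_nonneg h (Real.exp_pos _).le) (hμ x).le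
    linarith
  exact lt_of_le_of_lt (Finset.inf'_le f (Finset.mem_univ x)) hfx
end

section
/- Nonexistence above the threshold −min h: let c < 0 and let h : V → ℝ. If λ ∈ ℝ satisfies λ ≥ −min_{x∈V} h(x) (equivalently, h(x) + λ ≥ 0 for all x ∈ V), then the equation L u = (h + λ) e^{2u} − c has no solution u : V → ℝ. -/
/-- Nonexistence above the threshold `-min h`: if `h x + λ ≥ 0` for all `x`
and `c < 0`, then `L u = (h + λ) e^{2u} - c` has no solution. -/
theorem stmt_8 {V : Type*} [Fintype V] [Nonempty V] [DecidableEq V]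
    (μ : V → ℝ) (hμ : ∀ x, 0 < μ x)
    (W : V → V → ℝ) (hWsym : ∀ x y, W x y = W y x)
    (hWpos : ∀ x y, x ≠ y → 0 < W x y)
    (L : (V → ℝ) → (V → ℝ))
    (hL : ∀ u x, L u x = (1 / μ x) * ∑ y ∈ Finset.univ.erase x, W x y * (u x - u y))
    (c : ℝ) (hc : c < 0) (h : V → ℝ) (lam : ℝ)
    (hlam : ∀ x, 0 ≤ h x + lam) :
    ¬ ∃ u : V → ℝ, ∀ x, L u x = (h x + lam) * Real.exp (2 * u x) - c := by
  rintro ⟨u, hu⟩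
  obtain ⟨x₀, -, hmin⟩ := Finset.exists_min_image Finset.univ u ⟨Classical.arbitrary V, Finset.mem_univ _⟩
  have hle : L u x₀ ≤ 0 := by
    rw [hL]
    apply mul_nonpos_of_nonneg_of_nonpos
    · exact (one_div_pos.mpr (hμ x₀)).le
    · apply Finset.sum_nonpos
      intro y hy
      have hW := hWpos x₀ y (Finset.ne_of_mem_erase hy).symm
      have : u x₀ - u y ≤ 0 := sub_nonpos.mpr (hmin y (Finset.mem_univ y))
      exact mul_nonpos_of_nonneg_of_nonpos hW.le this
  have hpos : 0 < (h x₀ + lam) * Real.exp (2 * u x₀) - c := by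
    have := hlam x₀
    nlinarith [Real.exp_pos (2 * u x₀)]
  rw [hu x₀] at hle
  linarith
end

section
/- Rigidity for constant coefficient −1: let c < 0. If u : V → ℝ satisfies L u = −e^{2u} − c on V, then u is the constant function u ≡ (1/2) · log(−c). -/
/-- Rigidity for constant coefficient `-1`: if `c < 0` and
`L u = -e^{2u} - c`, then `u ≡ (1/2) log(-c)`. -/
theorem stmt_9 {V : Type*} [Fintype V] [Nonempty V] [DecidableEq V]
    (μ : V → ℝ) (hμ : ∀ x, 0 < μ x)
    (W : V → V → ℝ) (hWsym : ∀ x y, W x y = W y x)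
    (hWpos : ∀ x y, x ≠ y → 0 < W x y)
    (L : (V → ℝ) → (V → ℝ))
    (hL : ∀ u x, L u x = (1 / μ x) * ∑ y ∈ Finset.univ.erase x, W x y * (u x - u y))
    (c : ℝ) (hc : c < 0) (u : V → ℝ)
    (hu : ∀ x, L u x = -Real.exp (2 * u x) - c) :
    ∀ x, u x = (1 / 2) * Real.log (-c) := by
  have hclog : Real.exp (Real.log (-c)) = -c := Real.exp_log (by linarith)
  -- maximum point
  obtain ⟨x0, -, hx0⟩ := Finset.exists_max_image Finset.univ u Finset.univ_nonempty
  obtain ⟨x1, -, hx1⟩ := Finset.exists_min_image Finset.univ u Finset.univ_nonempty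
  have hLmax : 0 ≤ L u x0 := by
    rw [hL]
    apply mul_nonneg (by have := hμ x0; positivity)
    apply Finset.sum_nonneg
    intro y hy
    have hne : x0 ≠ y := fun h => (Finset.mem_erase.mp hy).1 h.symm
    have := hx0 y (Finset.mem_univ y)
    nlinarith [hWpos x0 y hne]
  have hLmin : L u x1 ≤ 0 := by
    rw [hL]
    apply mul_nonpos_of_nonneg_of_nonpos (by have := hμ x1; positivity)
    apply Finset.sum_nonpos
    intro y hy
    have hne : x1 ≠ y := fun h => (Finset.mem_erase.mp hy).1 h.symm
    have := hx1 y (Finset.mem_univ y)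
    nlinarith [hWpos x1 y hne]
  have hmax : 2 * u x0 ≤ Real.log (-c) := by
    rw [hu] at hLmax
    have : Real.exp (2 * u x0) ≤ Real.exp (Real.log (-c)) := by rw [hclog]; linarith
    exact Real.exp_le_exp.mp this
  have hmin : Real.log (-c) ≤ 2 * u x1 := by
    rw [hu] at hLmin
    have : Real.exp (Real.log (-c)) ≤ Real.exp (2 * u x1) := by rw [hclog]; linarith
    exact Real.exp_le_exp.mp this
  intro x
  have h1 := hx0 x (Finset.mem_univ x)
  have h2 := hx1 x (Finset.mem_univ x)
  linarith
end

section
/- Uniqueness for nonpositive coefficient: let c < 0 and let f : V → ℝ satisfy f(x) ≤ 0 for all x ∈ V. If u : V → ℝ and v : V → ℝ both satisfy L w = f e^{2w} − c on V, then u = v. -/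
/-- Antisymmetric double-sum vanishes. -/
lemma aux_sum_zero {V : Type*} [Fintype V] [DecidableEq V]
    (W : V → V → ℝ) (hWsym : ∀ x y, W x y = W y x) (u : V → ℝ) :
    ∑ x, ∑ y ∈ Finset.univ.erase x, W x y * (u x - u y) = 0 := by
  have hfull : ∀ x : V, ∑ y ∈ Finset.univ.erase x, W x y * (u x - u y)
      = ∑ y, W x y * (u x - u y) := by
    intro x
    exact Finset.sum_erase _ (by ring)
  have key : (∑ x, ∑ y, W x y * (u x - u y))
      = -∑ x, ∑ y, W x y * (u x - u y) := by
    calc (∑ x, ∑ y, W x y * (u x - u y))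
        = ∑ x, ∑ y, -(W y x * (u y - u x)) := by
          refine Finset.sum_congr rfl fun x _ => Finset.sum_congr rfl fun y _ => ?_
          rw [hWsym]; ring
      _ = -∑ x, ∑ y, W y x * (u y - u x) := by
          simp [Finset.sum_neg_distrib]
      _ = -∑ y, ∑ x, W y x * (u y - u x) := by rw [Finset.sum_comm]
  have : (∑ x, ∑ y, W x y * (u x - u y)) = 0 := by linarith
  simp only [hfull]; exact this

lemma aux_le {V : Type*} [Fintype V] [Nonempty V] [DecidableEq V]
    (μ : V → ℝ) (hμ : ∀ x, 0 < μ x)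
    (W : V → V → ℝ) (hWsym : ∀ x y, W x y = W y x)
    (hWpos : ∀ x y, x ≠ y → 0 < W x y)
    (L : (V → ℝ) → (V → ℝ))
    (hL : ∀ u x, L u x = (1 / μ x) * ∑ y ∈ Finset.univ.erase x, W x y * (u x - u y))
    (c : ℝ) (hc : c < 0) (f : V → ℝ) (hf : ∀ x, f x ≤ 0)
    (u v : V → ℝ)
    (hu : ∀ x, L u x = f x * Real.exp (2 * u x) - c)
    (hv : ∀ x, L v x = f x * Real.exp (2 * v x) - c) :
    ∀ x, u x ≤ v x := by
  by_contra h
  push_neg at h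
  obtain ⟨z, hz⟩ := h
  set w : V → ℝ := fun x => u x - v x with hw
  obtain ⟨x0, -, hx0⟩ := Finset.exists_max_image (Finset.univ : Finset V) w ⟨z, Finset.mem_univ z⟩
  have hmax : ∀ y, w y ≤ w x0 := fun y => hx0 y (Finset.mem_univ y)
  have hpos : 0 < w x0 := lt_of_lt_of_le (by simp [hw]; linarith) (hmax z)
  -- difference of equations
  have hLw : ∀ x, L u x - L v x
      = (1 / μ x) * ∑ y ∈ Finset.univ.erase x, W x y * (w x - w y) := by
    intro x
    rw [hL, hL, ← mul_sub, ← Finset.sum_sub_distrib]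
    congr 1
    refine Finset.sum_congr rfl fun y _ => ?_
    simp only [hw]; ring
  have hval : ∀ x, L u x - L v x
      = f x * (Real.exp (2 * u x) - Real.exp (2 * v x)) := by
    intro x; rw [hu, hv]; ring
  -- at x0 the sum is nonneg
  have hterm : ∀ x, ∀ y ∈ Finset.univ.erase x, 0 ≤ W x y * (w x0 - w y) := by
    intro x y hy
    have hne : y ≠ x := Finset.ne_of_mem_erase hy
    exact mul_nonneg (le_of_lt (hWpos x y (Ne.symm hne))) (by linarith [hmax y])
  have hSnonneg : 0 ≤ ∑ y ∈ Finset.univ.erase x0, W x0 y * (w x0 - w y) :=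
    Finset.sum_nonneg (hterm x0)
  have hexp0 : Real.exp (2 * v x0) < Real.exp (2 * u x0) := by
    apply Real.exp_lt_exp.mpr
    have : v x0 < u x0 := by have := hpos; simp [hw] at this; linarith
    linarith
  have hle0 : f x0 * (Real.exp (2 * u x0) - Real.exp (2 * v x0)) ≤ 0 :=
    mul_nonpos_of_nonpos_of_nonneg (hf x0) (by linarith)
  have hμpos := hμ x0
  have hSzero : ∑ y ∈ Finset.univ.erase x0, W x0 y * (w x0 - w y) = 0 := by
    have h1 : (1 / μ x0) * ∑ y ∈ Finset.univ.erase x0, W x0 y * (w x0 - w y) ≤ 0 := by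
      rw [← hLw, hval]; exact hle0
    have h2 : 0 ≤ (1 / μ x0) * ∑ y ∈ Finset.univ.erase x0, W x0 y * (w x0 - w y) :=
      mul_nonneg (by positivity) hSnonneg
    have := le_antisymm h1 h2
    have hinv : (1 / μ x0) ≠ 0 := by positivity
    exact (mul_eq_zero.mp this).resolve_left hinv
  -- each term zero ⇒ w constant
  have hconst : ∀ y, w y = w x0 := by
    intro y
    by_cases hyx : y = x0
    · rw [hyx]
    · have hy : y ∈ Finset.univ.erase x0 := Finset.mem_erase.mpr ⟨hyx, Finset.mem_univ y⟩
      have := (Finset.sum_eq_zero_iff_of_nonneg (hterm x0)).mp hSzero y hy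
      have hWp := hWpos x0 y (fun hh => hyx hh.symm)
      have : w x0 - w y = 0 := by
        rcases mul_eq_zero.mp this with h | h
        · exact absurd h (ne_of_gt hWp)
        · exact h
      linarith
  -- hence L u - L v ≡ 0, so f ≡ 0
  have hLzero : ∀ x, L u x - L v x = 0 := by
    intro x
    rw [hLw]
    have : ∑ y ∈ Finset.univ.erase x, W x y * (w x - w y) = 0 := by
      apply Finset.sum_eq_zero
      intro y hy
      rw [hconst x, hconst y]; ring
    rw [this, mul_zero]
  have hf0 : ∀ x, f x = 0 := by
    intro x
    have h1 := hLzero x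
    rw [hval] at h1
    have hexp : Real.exp (2 * v x) < Real.exp (2 * u x) := by
      apply Real.exp_lt_exp.mpr
      have h2 := hconst x
      have hpos' : 0 < u x0 - v x0 := by simpa [hw] using hpos
      have h2' : u x - v x = u x0 - v x0 := by simpa [hw] using h2
      linarith
    rcases mul_eq_zero.mp h1 with h | h
    · exact h
    · linarith
  -- then L u ≡ -c > 0, contradicting integral identity
  have hLuc : ∀ x, L u x = -c := by
    intro x; rw [hu, hf0]; ring
  have hint : ∑ x, μ x * L u x = 0 := by
    have : ∀ x : V, μ x * L u x = ∑ y ∈ Finset.univ.erase x, W x y * (u x - u y) := by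
      intro x
      rw [hL, one_div, ← mul_assoc, mul_inv_cancel₀ (ne_of_gt (hμ x)), one_mul]
    simp only [this]
    exact aux_sum_zero W hWsym u
  have hint2 : ∑ x, μ x * L u x = ∑ x : V, μ x * (-c) := by
    refine Finset.sum_congr rfl fun x _ => by rw [hLuc]
  have hposint : 0 < ∑ x : V, μ x * (-c) := by
    apply Finset.sum_pos
    · intro x _; exact mul_pos (hμ x) (by linarith)
    · exact Finset.univ_nonempty
  rw [hint] at hint2
  linarith

/-- Uniqueness for nonpositive coefficient: if `c < 0`, `f ≤ 0` on `V`,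
and `u, v` both solve `L w = f e^{2w} - c`, then `u = v`. -/
theorem stmt_10 {V : Type*} [Fintype V] [Nonempty V] [DecidableEq V]
    (μ : V → ℝ) (hμ : ∀ x, 0 < μ x)
    (W : V → V → ℝ) (hWsym : ∀ x y, W x y = W y x)
    (hWpos : ∀ x y, x ≠ y → 0 < W x y)
    (L : (V → ℝ) → (V → ℝ))
    (hL : ∀ u x, L u x = (1 / μ x) * ∑ y ∈ Finset.univ.erase x, W x y * (u x - u y))
    (c : ℝ) (hc : c < 0) (f : V → ℝ) (hf : ∀ x, f x ≤ 0)
    (u v : V → ℝ)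
    (hu : ∀ x, L u x = f x * Real.exp (2 * u x) - c)
    (hv : ∀ x, L v x = f x * Real.exp (2 * v x) - c) :
    u = v := by
  funext x
  exact le_antisymm
    (aux_le μ hμ W hWsym hWpos L hL c hc f hf u v hu hv x)
    (aux_le μ hμ W hWsym hWpos L hL c hc f hf v u hv hu x)
end

section
/- Existence of a local minimum solution for small positive λ: let c < 0 and let h : V → ℝ satisfy h ≢ 0 and max_{x∈V} h(x) = 0. Then there exists λ₀ > 0 such that for every λ ∈ (0, λ₀) the functional J_λ has a local minimum point u_λ (with respect to the sup norm on functions V → ℝ); in particular u_λ satisfies L u_λ = (h + λ) e^{2u_λ} − c on V. -/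
open Finset Real

lemma hd_affine (a b : ℝ) (t : ℝ) : HasDerivAt (fun t : ℝ => a + t * b) b t := by
  simpa using (hasDerivAt_mul_const b).const_add a

lemma euler_lagrange {V : Type*} [Fintype V] [DecidableEq V]
    (μ : V → ℝ) (hμ : ∀ x, 0 < μ x)
    (W : V → V → ℝ) (hWsym : ∀ x y, W x y = W y x)
    (c : ℝ) (h : V → ℝ) (lam : ℝ) (u : V → ℝ)
    (hmin : IsLocalMin (fun v : V → ℝ =>
      (1 / 4) * ∑ x : V, ∑ y ∈ Finset.univ.erase x, W x y * (v x - v y) ^ 2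
      - (1 / 2) * ∑ x : V, (h x + lam) * Real.exp (2 * v x) * μ x
      + c * ∑ x : V, v x * μ x) u) :
    ∀ z, ∑ y ∈ Finset.univ.erase z, W z y * (u z - u y)
      = (h z + lam) * Real.exp (2 * u z) * μ z - c * μ z := by
  intro z
  set s : V → ℝ := fun x => if x = z then 1 else 0 with hs_def
  have hs : ∀ (t : ℝ), (u + t • s) = fun x => u x + t * s x := by
    intro t; funext x; simp [Pi.add_apply]
  -- local min of the composition
  have hcont : Continuous (fun t : ℝ => u + t • s) := by fun_prop
  have hmin0 : IsLocalMin (fun t : ℝ => (fun v : V → ℝ =>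
      (1 / 4) * ∑ x : V, ∑ y ∈ Finset.univ.erase x, W x y * (v x - v y) ^ 2
      - (1 / 2) * ∑ x : V, (h x + lam) * Real.exp (2 * v x) * μ x
      + c * ∑ x : V, v x * μ x) (u + t • s)) 0 := by
    have h0 : u + (0:ℝ) • s = u := by simp
    have ht : ContinuousAt (fun t : ℝ => u + t • s) 0 := hcont.continuousAt
    rw [ContinuousAt] at ht
    simp only [h0] at ht
    have := ht.eventually hmin
    simpa [IsLocalMin, IsMinFilter, h0] using this
  -- derivative of the composition at 0
  have hder : HasDerivAt (fun t : ℝ => (fun v : V → ℝ =>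
      (1 / 4) * ∑ x : V, ∑ y ∈ Finset.univ.erase x, W x y * (v x - v y) ^ 2
      - (1 / 2) * ∑ x : V, (h x + lam) * Real.exp (2 * v x) * μ x
      + c * ∑ x : V, v x * μ x) (u + t • s))
      ((1 / 4) * ∑ x : V, ∑ y ∈ Finset.univ.erase x,
          W x y * (2 * (u x - u y) * (s x - s y))
       - (1 / 2) * ∑ x : V, (h x + lam) * (Real.exp (2 * u x) * (2 * s x)) * μ x
       + c * ∑ x : V, s x * μ x) 0 := by
    simp only [hs]
    have hA : HasDerivAt (fun t : ℝ =>
        ∑ x : V, ∑ y ∈ Finset.univ.erase x, W x y * ((u x + t * s x) - (u y + t * s y)) ^ 2)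
        (∑ x : V, ∑ y ∈ Finset.univ.erase x, W x y * (2 * (u x - u y) * (s x - s y))) 0 := by
      apply HasDerivAt.fun_sum; intro x _
      apply HasDerivAt.fun_sum; intro y _
      have hi : HasDerivAt (fun t : ℝ => (u x + t * s x) - (u y + t * s y)) (s x - s y) 0 :=
        (hd_affine (u x) (s x) 0).sub (hd_affine (u y) (s y) 0)
      have := (hi.pow 2).const_mul (W x y)
      simpa using this
    have hB : HasDerivAt (fun t : ℝ =>
        ∑ x : V, (h x + lam) * Real.exp (2 * (u x + t * s x)) * μ x)
        (∑ x : V, (h x + lam) * (Real.exp (2 * u x) * (2 * s x)) * μ x) 0 := by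
      apply HasDerivAt.fun_sum; intro x _
      have hi : HasDerivAt (fun t : ℝ => 2 * (u x + t * s x)) (2 * s x) 0 := by
        simpa [mul_comm, mul_assoc, mul_left_comm] using ((hd_affine (u x) (s x) 0).const_mul 2)
      have := ((hi.exp).const_mul (h x + lam)).mul_const (μ x)
      simpa [mul_comm, mul_assoc, mul_left_comm] using this
    have hC : HasDerivAt (fun t : ℝ => ∑ x : V, (u x + t * s x) * μ x)
        (∑ x : V, s x * μ x) 0 := by
      apply HasDerivAt.fun_sum; intro x _
      simpa using (hd_affine (u x) (s x) 0).mul_const (μ x)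
    exact ((hA.const_mul (1/4)).sub (hB.const_mul (1/2))).add (hC.const_mul c)
  have hd0 := hmin0.deriv_eq_zero
  rw [hder.deriv] at hd0
  -- now evaluate the sums
  have e1 : ∑ x : V, ∑ y ∈ Finset.univ.erase x, W x y * (2 * (u x - u y) * (s x - s y))
      = 4 * ∑ y ∈ Finset.univ.erase z, W z y * (u z - u y) := by
    rw [← Finset.sum_erase_add _ _ (Finset.mem_univ z)]
    have t1 : ∑ y ∈ Finset.univ.erase z, W z y * (2 * (u z - u y) * (s z - s y))
        = 2 * ∑ y ∈ Finset.univ.erase z, W z y * (u z - u y) := by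
      rw [Finset.mul_sum]
      apply Finset.sum_congr rfl
      intro y hy
      have hyz : y ≠ z := Finset.ne_of_mem_erase hy
      simp only [hs_def, if_pos rfl, if_neg hyz]
      ring
    have t2 : ∑ x ∈ Finset.univ.erase z, ∑ y ∈ Finset.univ.erase x,
        W x y * (2 * (u x - u y) * (s x - s y))
        = 2 * ∑ y ∈ Finset.univ.erase z, W z y * (u z - u y) := by
      rw [Finset.mul_sum]
      rw [Finset.sum_congr rfl (g := fun x => W x z * (2 * (u z - u x)))]
      · apply Finset.sum_congr rfl; intro x hx
        rw [hWsym]; ring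
      · intro x hx
        have hxz : x ≠ z := Finset.ne_of_mem_erase hx
        have hz : z ∈ Finset.univ.erase x := Finset.mem_erase.mpr ⟨Ne.symm hxz, Finset.mem_univ z⟩
        rw [Finset.sum_eq_single_of_mem z hz]
        · simp only [hs_def, if_pos rfl, if_neg hxz]; ring
        · intro y hy hyz
          have : y ≠ z := hyz
          simp only [hs_def, if_neg hxz, if_neg this]; ring
    rw [t1, t2]; ring
  have e2 : ∑ x : V, (h x + lam) * (Real.exp (2 * u x) * (2 * s x)) * μ x
      = 2 * ((h z + lam) * Real.exp (2 * u z) * μ z) := by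
    rw [Finset.sum_eq_single_of_mem z (Finset.mem_univ z)]
    · simp only [hs_def, if_pos rfl]; ring
    · intro y _ hyz; simp only [hs_def, if_neg hyz]; ring
  have e3 : ∑ x : V, s x * μ x = μ z := by
    rw [Finset.sum_eq_single_of_mem z (Finset.mem_univ z)]
    · simp [hs_def]
    · intro y _ hyz; simp [hs_def, if_neg hyz]
  rw [e1, e2, e3] at hd0
  linarith



set_option maxHeartbeats 1000000 in
lemma coercive {V : Type*} [Fintype V] [Nonempty V] [DecidableEq V]
    (μ : V → ℝ) (hμ : ∀ x, 0 < μ x)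
    (W : V → V → ℝ) (hWpos : ∀ x y, x ≠ y → 0 < W x y)
    (c : ℝ) (hc : c < 0)
    (h : V → ℝ) (hh0 : h ≠ 0) (hhle : ∀ x, h x ≤ 0) (hhmax : ∃ x, h x = 0) :
    ∃ R : ℝ, 0 < R ∧ ∀ u : V → ℝ, (∃ x, R ≤ |u x|) →
      (-(1/2) * ∑ x : V, h x * μ x) + 1 <
        (1 / 4) * ∑ x : V, ∑ y ∈ Finset.univ.erase x, W x y * (u x - u y) ^ 2
        - (1 / 2) * ∑ x : V, h x * Real.exp (2 * u x) * μ x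
        + c * ∑ x : V, u x * μ x := by
  classical
  obtain ⟨x1, hx1⟩ : ∃ x, h x < 0 := by
    by_contra hcon
    push_neg at hcon
    exact hh0 (funext fun x => le_antisymm (hhle x) (hcon x))
  obtain ⟨x0, hx0⟩ := hhmax
  have hx01 : x0 ≠ x1 := by
    intro he
    rw [he] at hx0
    rw [hx0] at hx1
    exact lt_irrefl 0 hx1
  -- constants
  obtain ⟨M, hM_def⟩ : ∃ t : ℝ, t = ∑ x : V, μ x := ⟨_, rfl⟩
  have hM : 0 < M := by
    rw [hM_def]; exact Finset.sum_pos (fun x _ => hμ x) Finset.univ_nonempty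
  obtain ⟨k, hk_def⟩ : ∃ t : ℝ, t = -c * M := ⟨_, rfl⟩
  have hk : 0 < k := by rw [hk_def]; exact mul_pos (neg_pos.mpr hc) hM
  obtain ⟨b, hb_def⟩ : ∃ t : ℝ, t = -(h x1) * μ x1 / 2 := ⟨_, rfl⟩
  have hb : 0 < b := by
    rw [hb_def]
    exact div_pos (mul_pos (neg_pos.mpr hx1) (hμ x1)) two_pos
  have hPne : (Finset.univ.filter (fun p : V × V => p.1 ≠ p.2)).Nonempty :=
    ⟨(x0, x1), Finset.mem_filter.mpr ⟨Finset.mem_univ _, hx01⟩⟩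
  obtain ⟨wm, hwm_def⟩ : ∃ t : ℝ,
      t = (Finset.univ.filter (fun p : V × V => p.1 ≠ p.2)).inf' hPne (fun p => W p.1 p.2) :=
    ⟨_, rfl⟩
  have hwm : 0 < wm := by
    rw [hwm_def, Finset.lt_inf'_iff]
    intro p hp
    exact hWpos p.1 p.2 (Finset.mem_filter.mp hp).2
  have hwle : ∀ x y : V, x ≠ y → wm ≤ W x y := by
    intro x y hxy
    have hmem : ((x, y) : V × V) ∈ Finset.univ.filter (fun p : V × V => p.1 ≠ p.2) :=
      Finset.mem_filter.mpr ⟨Finset.mem_univ _, hxy⟩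
    rw [hwm_def]
    exact Finset.inf'_le (fun p => W p.1 p.2) hmem
  obtain ⟨w, hw_def⟩ : ∃ t : ℝ, t = wm / 4 := ⟨_, rfl⟩
  have hw : 0 < w := by rw [hw_def]; exact div_pos hwm (by norm_num)
  obtain ⟨c₁, hc₁_def⟩ : ∃ t : ℝ, t = 2 * k * (1 - Real.log (2 * k / b)) := ⟨_, rfl⟩
  obtain ⟨c₃, hc₃_def⟩ : ∃ t : ℝ, t = |c₁| := ⟨_, rfl⟩
  have hc₃1 : -c₃ ≤ c₁ := by rw [hc₃_def]; exact neg_abs_le c₁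
  have hc₃0 : 0 ≤ c₃ := by rw [hc₃_def]; exact abs_nonneg c₁
  obtain ⟨B0, hB0_def⟩ : ∃ t : ℝ, t = -(1/2) * ∑ x : V, h x * μ x := ⟨_, rfl⟩
  have hB0 : 0 ≤ B0 := by
    rw [hB0_def]
    have h1 : ∑ x : V, h x * μ x ≤ 0 :=
      Finset.sum_nonpos fun x _ => mul_nonpos_of_nonpos_of_nonneg (hhle x) (hμ x).le
    linarith only [h1]
  obtain ⟨q, hq_def⟩ : ∃ t : ℝ, t = 4 * k ^ 2 / w := ⟨_, rfl⟩
  have hq : 0 < q := by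
    rw [hq_def]
    exact div_pos (by positivity) hw
  have hqw : q * w = 4 * k ^ 2 := by rw [hq_def]; exact div_mul_cancel₀ _ hw.ne'
  have hqo : ∀ o : ℝ, -q ≤ w * o ^ 2 - 4 * k * o := by
    intro o
    nlinarith only [sq_nonneg (w * o - 2 * k), hqw, hw]
  obtain ⟨r₁, hr₁_def⟩ : ∃ t : ℝ, t = 12 * k / w := ⟨_, rfl⟩
  have hr₁ : 0 < r₁ := by rw [hr₁_def]; exact div_pos (by positivity) hw
  have hwr₁ : w * r₁ = 12 * k := by
    rw [hr₁_def, mul_comm]; exact div_mul_cancel₀ _ hw.ne'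
  obtain ⟨r₂, hr₂_def⟩ : ∃ t : ℝ, t = (4 * (B0 + 1 + c₃ + q)) / k := ⟨_, rfl⟩
  have hr₂ : 0 < r₂ := by
    rw [hr₂_def]
    apply div_pos _ hk
    linarith only [hB0, hc₃0, hq]
  have hkr₂ : k * r₂ = 4 * (B0 + 1 + c₃ + q) := by
    rw [hr₂_def, mul_comm]; exact div_mul_cancel₀ _ hk.ne'
  obtain ⟨R, hR_def⟩ : ∃ t : ℝ, t = r₁ + r₂ + 1 := ⟨_, rfl⟩
  have hRpos : 0 < R := by rw [hR_def]; linarith only [hr₁, hr₂]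
  refine ⟨R, hRpos, ?_⟩
  rintro u ⟨xs, hxs⟩
  rw [← hB0_def]
  obtain ⟨m, hm_def⟩ : ∃ t : ℝ, t = Finset.univ.sup' Finset.univ_nonempty u := ⟨_, rfl⟩
  obtain ⟨n, hn_def⟩ : ∃ t : ℝ, t = Finset.univ.inf' Finset.univ_nonempty u := ⟨_, rfl⟩
  obtain ⟨o, ho_def⟩ : ∃ t : ℝ, t = m - n := ⟨_, rfl⟩
  have hmle : ∀ x, u x ≤ m := by
    intro x; rw [hm_def]; exact Finset.le_sup' u (Finset.mem_univ x)
  have hnle : ∀ x, n ≤ u x := by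
    intro x; rw [hn_def]; exact Finset.inf'_le u (Finset.mem_univ x)
  have hnm : n ≤ m := by
    have x := Classical.arbitrary V
    exact le_trans (hnle x) (hmle x)
  have ho : 0 ≤ o := by rw [ho_def]; linarith only [hnm]
  have hno : n = m - o := by rw [ho_def]; ring
  have hRmo : R ≤ |m| + o := by
    refine le_trans hxs (abs_le.mpr ⟨?_, ?_⟩)
    · have h1 : -(|m| + o) ≤ n := by rw [hno]; linarith only [neg_abs_le m, ho]
      linarith only [hnle xs, h1]
    · linarith only [hmle xs, le_abs_self m, ho]
  -- Dirichlet bound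
  have hterm_nonneg : ∀ x : V, ∀ y ∈ Finset.univ.erase x, 0 ≤ W x y * (u x - u y) ^ 2 := by
    intro x y hy
    exact mul_nonneg (hWpos x y (Finset.ne_of_mem_erase hy).symm).le (sq_nonneg _)
  have hsum_nonneg : ∀ x : V, 0 ≤ ∑ y ∈ Finset.univ.erase x, W x y * (u x - u y) ^ 2 :=
    fun x => Finset.sum_nonneg (hterm_nonneg x)
  have hD : wm * o ^ 2 ≤ ∑ x : V, ∑ y ∈ Finset.univ.erase x, W x y * (u x - u y) ^ 2 := by
    obtain ⟨xM, -, hxM⟩ := Finset.exists_mem_eq_sup' (Finset.univ_nonempty (α := V)) u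
    obtain ⟨xm, -, hxm⟩ := Finset.exists_mem_eq_inf' (Finset.univ_nonempty (α := V)) u
    rcases eq_or_ne xM xm with he | hne
    · have ho0 : o = 0 := by
        rw [ho_def, hm_def, hn_def, hxM, hxm, he]; ring
      rw [ho0]
      simpa using Finset.sum_nonneg fun x _ => hsum_nonneg x
    · have h1 : W xM xm * (u xM - u xm) ^ 2 ≤ ∑ y ∈ Finset.univ.erase xM,
          W xM y * (u xM - u y) ^ 2 :=
        Finset.single_le_sum (hterm_nonneg xM)
          (Finset.mem_erase.mpr ⟨Ne.symm hne, Finset.mem_univ _⟩)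
      have h2 : (∑ y ∈ Finset.univ.erase xM, W xM y * (u xM - u y) ^ 2) ≤
          ∑ x : V, ∑ y ∈ Finset.univ.erase x, W x y * (u x - u y) ^ 2 :=
        Finset.single_le_sum (f := fun x => ∑ y ∈ Finset.univ.erase x, W x y * (u x - u y) ^ 2)
          (fun x _ => hsum_nonneg x) (Finset.mem_univ xM)
      have h3 : (u xM - u xm) = o := by rw [ho_def, hm_def, hn_def, hxM, hxm]
      have h4 : wm * o ^ 2 ≤ W xM xm * o ^ 2 :=
        mul_le_mul_of_nonneg_right (hwle xM xm hne) (sq_nonneg o)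
      rw [h3] at h1
      linarith only [h1, h2, h4]
  -- exponential term bound
  have hT0 : ∀ x : V, h x * Real.exp (2 * u x) * μ x ≤ 0 := fun x =>
    mul_nonpos_of_nonpos_of_nonneg
      (mul_nonpos_of_nonpos_of_nonneg (hhle x) (Real.exp_pos _).le) (hμ x).le
  have hT : ∑ x : V, h x * Real.exp (2 * u x) * μ x ≤ -(2 * b) * Real.exp (2 * n) := by
    have h1 : ∑ x : V, h x * Real.exp (2 * u x) * μ x ≤ h x1 * Real.exp (2 * u x1) * μ x1 := by
      rw [← Finset.sum_erase_add _ _ (Finset.mem_univ x1)]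
      have h5 : ∑ x ∈ Finset.univ.erase x1, h x * Real.exp (2 * u x) * μ x ≤ 0 :=
        Finset.sum_nonpos fun x _ => hT0 x
      linarith only [h5]
    have h2 : h x1 * Real.exp (2 * u x1) * μ x1 ≤ h x1 * Real.exp (2 * n) * μ x1 := by
      apply mul_le_mul_of_nonneg_right _ (hμ x1).le
      apply mul_le_mul_of_nonpos_left _ hx1.le
      exact Real.exp_le_exp.mpr (by linarith only [hnle x1])
    have h3 : h x1 * Real.exp (2 * n) * μ x1 = -(2 * b) * Real.exp (2 * n) := by
      rw [hb_def]; ring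
    linarith only [h1, h2, h3]
  -- linear term bound
  have hU : ∑ x : V, u x * μ x ≤ m * M := by
    rw [hM_def, Finset.mul_sum]
    exact Finset.sum_le_sum fun x _ => mul_le_mul_of_nonneg_right (hmle x) (hμ x).le
  have hcU : c * (M * m) ≤ c * ∑ x : V, u x * μ x := by
    have h1 := mul_le_mul_of_nonpos_left hU hc.le
    linarith only [h1]
  have hcMm : c * (M * m) = -(k * m) := by rw [hk_def]; ring
  have hc' : -(k * m) ≤ c * ∑ x : V, u x * μ x := by rw [← hcMm]; exact hcU
  obtain ⟨F, hF_def⟩ : ∃ t : ℝ,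
      t = (1 / 4) * ∑ x : V, ∑ y ∈ Finset.univ.erase x, W x y * (u x - u y) ^ 2
        - (1 / 2) * ∑ x : V, h x * Real.exp (2 * u x) * μ x
        + c * ∑ x : V, u x * μ x := ⟨_, rfl⟩
  rw [← hF_def]
  have boundB : -(k * m) ≤ F := by
    rw [hF_def]
    have hD0 : (0:ℝ) ≤ ∑ x : V, ∑ y ∈ Finset.univ.erase x, W x y * (u x - u y) ^ 2 :=
      le_trans (mul_nonneg hwm.le (sq_nonneg o)) hD
    have hT0' : ∑ x : V, h x * Real.exp (2 * u x) * μ x ≤ 0 :=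
      Finset.sum_nonpos fun x _ => hT0 x
    linarith only [hD0, hT0', hc']
  -- tangent line bound for the exponential
  have htan : 2 * k * (2 * n + 1 - Real.log (2 * k / b)) ≤ b * Real.exp (2 * n) := by
    have hα : 0 < 2 * k / b := by positivity
    have h1 : (2 * n - Real.log (2 * k / b)) + 1 ≤ Real.exp (2 * n - Real.log (2 * k / b)) :=
      Real.add_one_le_exp _
    have h3 : (2 * k / b) * ((2 * n - Real.log (2 * k / b)) + 1) ≤
        (2 * k / b) * Real.exp (2 * n - Real.log (2 * k / b)) :=
      mul_le_mul_of_nonneg_left h1 hα.le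
    have h4 := mul_le_mul_of_nonneg_left h3 hb.le
    have e_left : b * ((2 * k / b) * ((2 * n - Real.log (2 * k / b)) + 1))
        = 2 * k * (2 * n + 1 - Real.log (2 * k / b)) := by
      field_simp
      ring
    have e_right : b * ((2 * k / b) * Real.exp (2 * n - Real.log (2 * k / b)))
        = b * Real.exp (2 * n) := by
      rw [Real.exp_sub, Real.exp_log hα]
      field_simp
    linarith only [h4, e_left.le, e_left.ge, e_right.le, e_right.ge]
  -- bound A'
  have boundA' : w * o ^ 2 - 4 * k * o + 3 * k * m + c₁ ≤ F := by
    have h5 : 2 * k * (2 * n + 1 - Real.log (2 * k / b)) = 4 * k * m - 4 * k * o + c₁ := by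
      rw [hc₁_def, hno]; ring
    have htan' : 4 * k * m - 4 * k * o + c₁ ≤ b * Real.exp (2 * n) := by
      rw [← h5]; exact htan
    have hweq : w * o ^ 2 = (1/4) * (wm * o ^ 2) := by rw [hw_def]; ring
    have hD' : w * o ^ 2 ≤ (1/4) * ∑ x : V, ∑ y ∈ Finset.univ.erase x,
        W x y * (u x - u y) ^ 2 := by
      rw [hweq]
      linarith only [hD]
    have hT' : b * Real.exp (2 * n) ≤ -(1/2) * ∑ x : V, h x * Real.exp (2 * u x) * μ x := by
      linarith only [hT]
    rw [hF_def]
    linarith only [hD', hT', htan', hc']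
  -- final case analysis
  have hkR : k * R = k * r₁ + k * r₂ + k := by rw [hR_def]; ring
  have hkr₁ : 0 < k * r₁ := mul_pos hk hr₁
  rcases le_or_gt (R / 2) |m| with hm2 | hm2
  · rcases le_or_gt 0 m with hm0 | hm0
    · have hmR : R / 2 ≤ m := by rwa [abs_of_nonneg hm0] at hm2
      have h3km : 3 * k * (R / 2) ≤ 3 * k * m :=
        mul_le_mul_of_nonneg_left hmR (by positivity)
      linarith only [hqo o, boundA', h3km, hkR, hkr₂, hkr₁, hq, hc₃1, hc₃0, hk, hB0]
    · have hmR : R / 2 ≤ -m := by rwa [abs_of_neg hm0] at hm2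
      have h1 : k * (R / 2) ≤ k * (-m) := mul_le_mul_of_nonneg_left hmR hk.le
      have e : k * (-m) = -(k * m) := by ring
      linarith only [boundB, hkR, hkr₂, hkr₁, hq, hc₃0, hk, hB0, h1, e]
  · have ho2 : R / 2 ≤ o := by linarith only [hRmo, hm2]
    have h4F : w * o ^ 2 - 4 * k * o + c₁ ≤ 4 * F := by linarith only [boundA', boundB]
    have hwR : w * R = w * r₁ + w * r₂ + w := by rw [hR_def]; ring
    have e1 : 0 ≤ w * R - 12 * k := by
      have h6 := mul_pos hw hr₂
      linarith only [hwr₁, hw, hwR, h6]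
    have hd : (0:ℝ) ≤ o - R / 2 := by linarith only [ho2]
    have e2 : k * R ≤ w * o ^ 2 - 4 * k * o := by
      linarith only [mul_nonneg e1 hRpos.le, mul_nonneg e1 hd,
        mul_nonneg hw.le (sq_nonneg (o - R / 2)), mul_nonneg hk.le hd]
    linarith only [hkR, hkr₂, hkr₁, hq, hc₃1, hc₃0, hk, h4F, e2, hB0]

set_option maxHeartbeats 1000000 in
/-- Existence of a local minimum solution for small positive `λ`:
there is `λ₀ > 0` such that for all `λ ∈ (0, λ₀)` the functional `J_λ`
has a local minimum point `u_λ`, which solves `L u = (h + λ) e^{2u} - c`.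
(For finite `V` the product topology on `V → ℝ` coincides with the
sup-norm topology.) -/
theorem stmt_11 {V : Type*} [Fintype V] [Nonempty V] [DecidableEq V]
    (μ : V → ℝ) (hμ : ∀ x, 0 < μ x)
    (W : V → V → ℝ) (hWsym : ∀ x y, W x y = W y x)
    (hWpos : ∀ x y, x ≠ y → 0 < W x y)
    (L : (V → ℝ) → (V → ℝ))
    (hL : ∀ u x, L u x = (1 / μ x) * ∑ y ∈ Finset.univ.erase x, W x y * (u x - u y))
    (c : ℝ) (hc : c < 0)
    (h : V → ℝ) (hh0 : h ≠ 0) (hhle : ∀ x, h x ≤ 0) (hhmax : ∃ x, h x = 0)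
    (J : ℝ → (V → ℝ) → ℝ)
    (hJ : ∀ lam u, J lam u =
      (1 / 4) * ∑ x : V, ∑ y ∈ Finset.univ.erase x, W x y * (u x - u y) ^ 2
      - (1 / 2) * ∑ x : V, (h x + lam) * Real.exp (2 * u x) * μ x
      + c * ∑ x : V, u x * μ x) :
    ∃ lam₀ : ℝ, 0 < lam₀ ∧ ∀ lam : ℝ, 0 < lam → lam < lam₀ →
      ∃ u : V → ℝ, IsLocalMin (J lam) u ∧
        ∀ x, L u x = (h x + lam) * Real.exp (2 * u x) - c := by
  classical
  obtain ⟨R, hRpos, hcoer⟩ := coercive μ hμ W hWpos c hc h hh0 hhle hhmax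
  have hMsum : 0 < ∑ x : V, μ x := Finset.sum_pos (fun x _ => hμ x) Finset.univ_nonempty
  have hden : 0 < (∑ x : V, μ x) * Real.exp (2 * R) := mul_pos hMsum (Real.exp_pos _)
  refine ⟨2 / ((∑ x : V, μ x) * Real.exp (2 * R)), div_pos two_pos hden, ?_⟩
  intro lam hlam0 hlam1
  have hlt1 : lam / 2 * ((∑ x : V, μ x) * Real.exp (2 * R)) < 1 := by
    have h1 := (lt_div_iff₀ hden).mp hlam1
    linarith only [h1]
  -- the functional
  obtain ⟨G, hGv⟩ : ∃ G : (V → ℝ) → ℝ, ∀ v,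
      G v = (1 / 4) * ∑ x : V, ∑ y ∈ Finset.univ.erase x, W x y * (v x - v y) ^ 2
      - (1 / 2) * ∑ x : V, (h x + lam) * Real.exp (2 * v x) * μ x
      + c * ∑ x : V, v x * μ x := ⟨_, fun v => rfl⟩
  have hGfun : G = fun v =>
      (1 / 4) * ∑ x : V, ∑ y ∈ Finset.univ.erase x, W x y * (v x - v y) ^ 2
      - (1 / 2) * ∑ x : V, (h x + lam) * Real.exp (2 * v x) * μ x
      + c * ∑ x : V, v x * μ x := funext hGv
  have hJG : J lam = G := by
    funext v
    rw [hGv v]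
    exact hJ lam v
  have hGcont : Continuous G := by
    rw [hGfun]
    fun_prop
  -- splitting of the functional
  have hsplit : ∀ v : V → ℝ, G v =
      ((1 / 4) * ∑ x : V, ∑ y ∈ Finset.univ.erase x, W x y * (v x - v y) ^ 2
      - (1 / 2) * ∑ x : V, h x * Real.exp (2 * v x) * μ x
      + c * ∑ x : V, v x * μ x)
      - lam / 2 * ∑ x : V, Real.exp (2 * v x) * μ x := by
    intro v
    rw [hGv v]
    have hs : ∑ x : V, (h x + lam) * Real.exp (2 * v x) * μ x
        = (∑ x : V, h x * Real.exp (2 * v x) * μ x)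
          + lam * ∑ x : V, Real.exp (2 * v x) * μ x := by
      rw [Finset.mul_sum, ← Finset.sum_add_distrib]
      exact Finset.sum_congr rfl fun x _ => by ring
    rw [hs]
    ring
  -- value at zero
  have hG0 : G 0 = (-(1/2) * ∑ x : V, h x * μ x) - lam / 2 * ∑ x : V, μ x := by
    rw [hsplit 0]
    simp [Real.exp_zero]
  -- minimisation over the compact cube
  have hCc : IsCompact (Set.univ.pi fun _ : V => Set.Icc (-R) R) :=
    isCompact_univ_pi fun i => isCompact_Icc
  have hC0 : (0 : V → ℝ) ∈ (Set.univ.pi fun _ : V => Set.Icc (-R) R) :=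
    Set.mem_univ_pi.mpr fun x => by
      simp only [Pi.zero_apply, Set.mem_Icc]
      constructor <;> linarith only [hRpos]
  obtain ⟨u, huC, humin⟩ := hCc.exists_isMinOn ⟨0, hC0⟩ hGcont.continuousOn
  have hmin0 : G u ≤ G 0 := (isMinOn_iff.mp humin) 0 hC0
  -- bound on the exponential mass over the cube
  have hEle : ∀ v ∈ (Set.univ.pi fun _ : V => Set.Icc (-R) R),
      ∑ x : V, Real.exp (2 * v x) * μ x ≤ (∑ x : V, μ x) * Real.exp (2 * R) := by
    intro v hv
    rw [Finset.sum_mul]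
    apply Finset.sum_le_sum
    intro x _
    have hvx : v x ≤ R := (Set.mem_Icc.mp (Set.mem_univ_pi.mp hv x)).2
    have he : Real.exp (2 * v x) ≤ Real.exp (2 * R) :=
      Real.exp_le_exp.mpr (by linarith only [hvx])
    calc Real.exp (2 * v x) * μ x ≤ Real.exp (2 * R) * μ x :=
          mul_le_mul_of_nonneg_right he (hμ x).le
      _ = μ x * Real.exp (2 * R) := by ring
  -- the minimiser is interior
  have hint : ∀ x, u x ∈ Set.Ioo (-R) R := by
    intro x
    by_contra hx
    have hxIcc := Set.mem_Icc.mp (Set.mem_univ_pi.mp huC x)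
    have hRabs : R ≤ |u x| := by
      rcases le_or_gt (u x) (-R) with h1 | h1
      · rw [abs_of_nonpos (by linarith only [h1, hRpos])]
        linarith only [h1]
      · have h2 : R ≤ u x := by
          by_contra hh
          push_neg at hh
          exact hx (Set.mem_Ioo.mpr ⟨h1, hh⟩)
        exact le_trans h2 (le_abs_self _)
    have hbig := hcoer u ⟨x, hRabs⟩
    have hE := hEle u huC
    have hlamE : lam / 2 * (∑ x : V, Real.exp (2 * u x) * μ x)
        ≤ lam / 2 * ((∑ x : V, μ x) * Real.exp (2 * R)) :=
      mul_le_mul_of_nonneg_left hE (by linarith only [hlam0])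
    have hpos2 : 0 < lam / 2 * ∑ x : V, μ x :=
      mul_pos (by linarith only [hlam0]) hMsum
    linarith only [hbig, hsplit u, hmin0, hG0, hlamE, hlt1, hpos2]
  -- local minimality
  have hUopen : IsOpen (Set.univ.pi fun _ : V => Set.Ioo (-R) R) :=
    isOpen_set_pi Set.finite_univ fun a _ => isOpen_Ioo
  have hUsub : (Set.univ.pi fun _ : V => Set.Ioo (-R) R) ⊆
      (Set.univ.pi fun _ : V => Set.Icc (-R) R) :=
    Set.pi_mono fun i _ => Set.Ioo_subset_Icc_self
  have hmem : u ∈ (Set.univ.pi fun _ : V => Set.Ioo (-R) R) :=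
    Set.mem_univ_pi.mpr hint
  have hlocal : IsLocalMin G u :=
    humin.isLocalMin (Filter.mem_of_superset (hUopen.mem_nhds hmem) hUsub)
  have hlocalJ : IsLocalMin (J lam) u := by rw [hJG]; exact hlocal
  -- the Euler–Lagrange equation
  rw [hGfun] at hlocal
  have heq := euler_lagrange μ hμ W hWsym c h lam u hlocal
  refine ⟨u, hlocalJ, ?_⟩
  intro x
  rw [hL u x, heq x]
  field_simp [(hμ x).ne']
end

section
/- Downward propagation of solvability: let c < 0 and let h : V → ℝ satisfy h ≢ 0 and max_{x∈V} h(x) = 0. Suppose λ* > 0 is such that the equation L u = (h + λ*) e^{2u} − c has a solution. Then for every λ with 0 < λ < λ*, the functional J_λ has a local minimum point u_λ (with respect to the sup norm); in particular the equation L u = (h + λ) e^{2u} − c has a solution. -/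
open Set Filter Topology Finset

/-- One-sided derivative test: min at right endpoint of an interval forces `d ≤ 0`. -/
lemma deriv_nonpos_of_min_right {f : ℝ → ℝ} {a b d : ℝ} (hab : a < b)
    (hf : HasDerivAt f d b) (hmin : ∀ s ∈ Set.Icc a b, f b ≤ f s) : d ≤ 0 := by
  by_contra hd
  push_neg at hd
  have h2 : Tendsto (slope f b) (𝓝[<] b) (𝓝 d) :=
    (hasDerivAt_iff_tendsto_slope.1 hf).mono_left
      (nhdsWithin_mono b (fun y hy => ne_of_lt hy))
  have h3 : ∀ᶠ s in 𝓝[<] b, 0 < slope f b s := h2.eventually (eventually_gt_nhds hd)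
  have h4 : ∀ᶠ s in 𝓝[<] b, a < s :=
    eventually_nhdsWithin_of_eventually_nhds (eventually_gt_nhds hab)
  have h5 : ∀ᶠ s in 𝓝[<] b, s < b := eventually_mem_nhdsWithin.mono (fun s hs => hs)
  obtain ⟨s, hs3, hs4, hs5⟩ := (h3.and (h4.and h5)).exists
  have hfs : f b ≤ f s := hmin s ⟨hs4.le, hs5.le⟩
  have : slope f b s ≤ 0 := by
    rw [slope_def_field]
    exact div_nonpos_of_nonneg_of_nonpos (by linarith) (by linarith)
  linarith

/-- One-sided derivative test: min at left endpoint of an interval forces `0 ≤ d`. -/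
lemma deriv_nonneg_of_min_left {f : ℝ → ℝ} {a b d : ℝ} (hab : a < b)
    (hf : HasDerivAt f d a) (hmin : ∀ s ∈ Set.Icc a b, f a ≤ f s) : 0 ≤ d := by
  by_contra hd
  push_neg at hd
  have h2 : Tendsto (slope f a) (𝓝[>] a) (𝓝 d) :=
    (hasDerivAt_iff_tendsto_slope.1 hf).mono_left
      (nhdsWithin_mono a (fun y hy => (ne_of_gt hy)))
  have h3 : ∀ᶠ s in 𝓝[>] a, slope f a s < 0 := h2.eventually (eventually_lt_nhds hd)
  have h4 : ∀ᶠ s in 𝓝[>] a, s < b :=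
    eventually_nhdsWithin_of_eventually_nhds (eventually_lt_nhds hab)
  have h5 : ∀ᶠ s in 𝓝[>] a, a < s := eventually_mem_nhdsWithin.mono (fun s hs => hs)
  obtain ⟨s, hs3, hs4, hs5⟩ := (h3.and (h4.and h5)).exists
  have hfs : f a ≤ f s := hmin s ⟨hs5.le, hs4.le⟩
  have : 0 ≤ slope f a s := by
    rw [slope_def_field]
    exact div_nonneg (by linarith) (by linarith)
  linarith

/-- Explicit formula for the one-variable slice of the energy functional. -/
lemma phi_formula {V : Type*} [Fintype V] [DecidableEq V]
    (μ : V → ℝ) (W : V → V → ℝ) (hWsym : ∀ x y, W x y = W y x)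
    (c lam : ℝ) (h : V → ℝ) (u : V → ℝ) (x : V) (s : ℝ) :
    ((1 : ℝ) / 4) * ∑ p : V, ∑ q ∈ Finset.univ.erase p,
        W p q * (Function.update u x s p - Function.update u x s q) ^ 2
      - (1 / 2) * ∑ p : V, (h p + lam) * Real.exp (2 * Function.update u x s p) * μ p
      + c * ∑ p : V, Function.update u x s p * μ p
    = (1/2) * ∑ y ∈ Finset.univ.erase x, W x y * (s - u y)^2
      + (1/4) * ∑ p ∈ Finset.univ.erase x, ∑ q ∈ (Finset.univ.erase p).erase x,
          W p q * (u p - u q)^2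
      - (1/2) * ((h x + lam) * Real.exp (2*s) * μ x)
      - (1/2) * ∑ y ∈ Finset.univ.erase x, (h y + lam) * Real.exp (2 * u y) * μ y
      + c * (s * μ x)
      + c * ∑ y ∈ Finset.univ.erase x, u y * μ y := by
  set v := Function.update u x s with hv
  have e1 : ∀ (f : V → ℝ), ∑ p : V, f p = f x + ∑ p ∈ Finset.univ.erase x, f p :=
    fun f => (Finset.add_sum_erase _ f (Finset.mem_univ x)).symm
  have hvx : v x = s := Function.update_self x s u
  have hvy : ∀ y, y ≠ x → v y = u y := fun y hy => Function.update_of_ne hy s u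
  have hq : ∑ p : V, ∑ q ∈ Finset.univ.erase p, W p q * (v p - v q)^2
      = (∑ q ∈ Finset.univ.erase x, W x q * (s - u q)^2)
        + ∑ p ∈ Finset.univ.erase x, (W p x * (u p - s)^2
            + ∑ q ∈ (Finset.univ.erase p).erase x, W p q * (u p - u q)^2) := by
    rw [e1]
    congr 1
    · exact Finset.sum_congr rfl fun q hq => by
        rw [hvx, hvy q (Finset.ne_of_mem_erase hq)]
    · refine Finset.sum_congr rfl fun p hp => ?_
      have hpx : p ≠ x := Finset.ne_of_mem_erase hp
      rw [← Finset.add_sum_erase _ _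
        (Finset.mem_erase_of_ne_of_mem hpx.symm (Finset.mem_univ x))]
      congr 1
      · rw [hvx, hvy p hpx]
      · refine Finset.sum_congr rfl fun q hq => ?_
        have hqx : q ≠ x := (Finset.mem_erase.1 hq).1
        rw [hvy p hpx, hvy q hqx]
  have hq2 : ∑ p ∈ Finset.univ.erase x, (W p x * (u p - s)^2
        + ∑ q ∈ (Finset.univ.erase p).erase x, W p q * (u p - u q)^2)
      = (∑ p ∈ Finset.univ.erase x, W x p * (s - u p)^2)
        + ∑ p ∈ Finset.univ.erase x, ∑ q ∈ (Finset.univ.erase p).erase x,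
            W p q * (u p - u q)^2 := by
    rw [← Finset.sum_add_distrib]
    refine Finset.sum_congr rfl fun p _ => ?_
    rw [hWsym p x, show (u p - s)^2 = (s - u p)^2 from by ring]
  have hs1 : ∑ p : V, (h p + lam) * Real.exp (2 * v p) * μ p
      = (h x + lam) * Real.exp (2*s) * μ x
        + ∑ y ∈ Finset.univ.erase x, (h y + lam) * Real.exp (2 * u y) * μ y := by
    rw [e1, hvx]
    congr 1
    exact Finset.sum_congr rfl fun q hq => by rw [hvy q (Finset.ne_of_mem_erase hq)]
  have hs2 : ∑ p : V, v p * μ p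
      = s * μ x + ∑ y ∈ Finset.univ.erase x, u y * μ y := by
    rw [e1, hvx]
    congr 1
    exact Finset.sum_congr rfl fun q hq => by rw [hvy q (Finset.ne_of_mem_erase hq)]
  rw [hq, hq2, hs1, hs2]
  ring

/-- Derivative of the one-variable slice of the energy functional. -/
lemma phi_hasDeriv {V : Type*} [Fintype V] [DecidableEq V]
    (μ : V → ℝ) (W : V → V → ℝ) (hWsym : ∀ x y, W x y = W y x)
    (c lam : ℝ) (h : V → ℝ)
    (J : ℝ → (V → ℝ) → ℝ)
    (hJ : ∀ lam u, J lam u =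
      (1 / 4) * ∑ x : V, ∑ y ∈ Finset.univ.erase x, W x y * (u x - u y) ^ 2
      - (1 / 2) * ∑ x : V, (h x + lam) * Real.exp (2 * u x) * μ x
      + c * ∑ x : V, u x * μ x)
    (u : V → ℝ) (x : V) (s : ℝ) :
    HasDerivAt (fun s => J lam (Function.update u x s))
      ((∑ y ∈ Finset.univ.erase x, W x y * (s - u y))
        - (h x + lam) * Real.exp (2*s) * μ x + c * μ x) s := by
  have heq : (fun s => J lam (Function.update u x s))
      = fun s => (1/2) * ∑ y ∈ Finset.univ.erase x, W x y * (s - u y)^2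
      + (1/4) * ∑ p ∈ Finset.univ.erase x, ∑ q ∈ (Finset.univ.erase p).erase x,
          W p q * (u p - u q)^2
      - (1/2) * ((h x + lam) * Real.exp (2*s) * μ x)
      - (1/2) * ∑ y ∈ Finset.univ.erase x, (h y + lam) * Real.exp (2 * u y) * μ y
      + c * (s * μ x)
      + c * ∑ y ∈ Finset.univ.erase x, u y * μ y := by
    funext t
    rw [hJ]
    exact phi_formula μ W hWsym c lam h u x t
  rw [heq]
  have h1 : HasDerivAt (fun s : ℝ => ∑ y ∈ Finset.univ.erase x, W x y * (s - u y)^2)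
      (∑ y ∈ Finset.univ.erase x, W x y * (2 * (s - u y)^1 * 1)) s :=
    HasDerivAt.fun_sum fun y _ =>
      (((hasDerivAt_id s).sub_const (u y)).pow 2).const_mul (W x y)
  have h2 : HasDerivAt (fun s : ℝ => Real.exp (2*s)) (Real.exp (2*s) * (2*1)) s :=
    ((hasDerivAt_id s).const_mul 2).exp
  have h3 : HasDerivAt (fun s : ℝ => (h x + lam) * Real.exp (2*s) * μ x)
      ((h x + lam) * (Real.exp (2*s) * (2*1)) * μ x) s :=
    (h2.const_mul (h x + lam)).mul_const (μ x)
  have h4 : HasDerivAt (fun s : ℝ => c * (s * μ x)) (c * μ x) s := by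
    simpa using (((hasDerivAt_id s).mul_const (μ x)).const_mul c)
  have h5 := (((((h1.const_mul (1/2:ℝ)).add_const
      ((1:ℝ)/4 * ∑ p ∈ Finset.univ.erase x, ∑ q ∈ (Finset.univ.erase p).erase x,
          W p q * (u p - u q)^2)).sub (h3.const_mul (1/2:ℝ))).sub_const
      ((1:ℝ)/2 * ∑ y ∈ Finset.univ.erase x, (h y + lam) * Real.exp (2 * u y) * μ y)).add
      h4).add_const (c * ∑ y ∈ Finset.univ.erase x, u y * μ y)
  convert h5 using 1
  · rfl
  · rfl
  · rfl
  rw [Finset.mul_sum]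
  have : ∀ y, W x y * (s - u y) = 1/2 * (W x y * (2 * (s - u y)^1 * 1)) := fun y => by ring
  rw [Finset.sum_congr rfl (fun y _ => this y)]
  ring

/-- Downward propagation of solvability: if `L u = (h + λ*) e^{2u} - c`
has a solution for some `λ* > 0`, then for each `0 < λ < λ*` the functional
`J_λ` has a local minimum point; in particular the equation with parameter `λ`
has a solution. -/
theorem stmt_12 {V : Type*} [Fintype V] [Nonempty V] [DecidableEq V]
    (μ : V → ℝ) (hμ : ∀ x, 0 < μ x)
    (W : V → V → ℝ) (hWsym : ∀ x y, W x y = W y x)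
    (hWpos : ∀ x y, x ≠ y → 0 < W x y)
    (L : (V → ℝ) → (V → ℝ))
    (hL : ∀ u x, L u x = (1 / μ x) * ∑ y ∈ Finset.univ.erase x, W x y * (u x - u y))
    (c : ℝ) (hc : c < 0)
    (h : V → ℝ) (hh0 : h ≠ 0) (hhle : ∀ x, h x ≤ 0) (hhmax : ∃ x, h x = 0)
    (J : ℝ → (V → ℝ) → ℝ)
    (hJ : ∀ lam u, J lam u =
      (1 / 4) * ∑ x : V, ∑ y ∈ Finset.univ.erase x, W x y * (u x - u y) ^ 2
      - (1 / 2) * ∑ x : V, (h x + lam) * Real.exp (2 * u x) * μ x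
      + c * ∑ x : V, u x * μ x)
    (lamStar : ℝ) (hlamStar : 0 < lamStar)
    (hsol : ∃ u : V → ℝ, ∀ x, L u x = (h x + lamStar) * Real.exp (2 * u x) - c) :
    ∀ lam : ℝ, 0 < lam → lam < lamStar →
      ∃ u : V → ℝ, IsLocalMin (J lam) u ∧
        ∀ x, L u x = (h x + lam) * Real.exp (2 * u x) - c := by
  intro lam hlam0 hlamlt
  obtain ⟨uS, huS⟩ := hsol
  -- the sum identity for L
  have hLsum : ∀ (u : V → ℝ) (x : V),
      ∑ y ∈ Finset.univ.erase x, W x y * (u x - u y) = μ x * L u x := by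
    intro u x
    have hne := (hμ x).ne'
    rw [hL]
    field_simp
  -- choice of the constant subsolution level a
  set B : ℝ := 1 + lam + ∑ x : V, |h x| with hB
  have hBpos : 0 < B := by
    have : (0:ℝ) ≤ ∑ x : V, |h x| := Finset.sum_nonneg fun x _ => abs_nonneg _
    linarith
  set m : ℝ := Finset.univ.inf' Finset.univ_nonempty uS with hm
  set a : ℝ := min m (Real.log (-c / B) / 2) - 1 with ha
  have haS : ∀ x, a < uS x := by
    intro x
    have h1 : m ≤ uS x := Finset.inf'_le _ (Finset.mem_univ x)
    have h2 : a ≤ m - 1 := by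
      have := min_le_left m (Real.log (-c / B) / 2)
      simp only [ha]; linarith
    linarith
  have haB : ∀ x, c < (h x + lam) * Real.exp (2 * a) := by
    intro x
    have hcB : 0 < -c / B := div_pos (by linarith) hBpos
    have h2a : 2 * a ≤ Real.log (-c / B) - 2 := by
      have := min_le_right m (Real.log (-c / B) / 2)
      simp only [ha]; linarith
    have hexp : Real.exp (2 * a) ≤ Real.exp (Real.log (-c / B) - 2) :=
      Real.exp_le_exp.2 h2a
    have hval : Real.exp (Real.log (-c / B) - 2) = (-c / B) * Real.exp (-2) := by
      rw [Real.exp_sub, Real.exp_log hcB, Real.exp_neg]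
      ring
    have hlt1 : Real.exp (-2 : ℝ) < 1 := Real.exp_lt_one_iff.2 (by norm_num)
    have hBe : B * Real.exp (2 * a) < -c := by
      have h6 : Real.exp (2 * a) < -c / B := by
        rw [hval] at hexp
        nlinarith [Real.exp_pos (2 * a)]
      calc B * Real.exp (2 * a) < B * (-c / B) := by
            exact (mul_lt_mul_iff_right₀ hBpos).2 h6
        _ = -c := by field_simp
    have habs : |h x + lam| ≤ B := by
      have h7 : |h x| ≤ ∑ y : V, |h y| :=
        Finset.single_le_sum (fun y _ => abs_nonneg (h y)) (Finset.mem_univ x)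
      calc |h x + lam| ≤ |h x| + |lam| := abs_add_le _ _
        _ = |h x| + lam := by rw [abs_of_pos hlam0]
        _ ≤ B := by simp only [hB]; linarith
    have := neg_abs_le (h x + lam)
    nlinarith [Real.exp_pos (2 * a), abs_nonneg (h x + lam)]
  -- the compact box K
  set K : Set (V → ℝ) := Set.pi Set.univ (fun x => Set.Icc a (uS x)) with hK
  have hKc : IsCompact K := isCompact_univ_pi fun x => isCompact_Icc
  have hKne : K.Nonempty := ⟨uS, fun x _ => ⟨(haS x).le, le_refl _⟩⟩
  have hJcont : Continuous (J lam) := by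
    have hJl : J lam = fun u => (1 / 4) * ∑ x : V, ∑ y ∈ Finset.univ.erase x,
          W x y * (u x - u y) ^ 2
        - (1 / 2) * ∑ x : V, (h x + lam) * Real.exp (2 * u x) * μ x
        + c * ∑ x : V, u x * μ x := funext (hJ lam)
    rw [hJl]
    refine ((continuous_const.mul ?_).sub (continuous_const.mul ?_)).add
      (continuous_const.mul ?_)
    · exact continuous_finset_sum _ fun p _ => continuous_finset_sum _ fun q _ =>
        continuous_const.mul (((continuous_apply p).sub (continuous_apply q)).pow 2)
    · exact continuous_finset_sum _ fun p _ =>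
        (continuous_const.mul
          (Real.continuous_exp.comp (continuous_const.mul (continuous_apply p)))).mul
          continuous_const
    · exact continuous_finset_sum _ fun p _ => (continuous_apply p).mul continuous_const
  obtain ⟨u0, hu0K, hu0minOn⟩ := hKc.exists_isMinOn hKne hJcont.continuousOn
  have hu0min : ∀ v ∈ K, J lam u0 ≤ J lam v := fun v hv => hu0minOn hv
  have hu0mem : ∀ x, u0 x ∈ Set.Icc a (uS x) := fun x => hu0K x (Set.mem_univ x)
  -- updating a point stays in K
  have hmemK : ∀ (x : V) (s : ℝ), s ∈ Set.Icc a (uS x) → Function.update u0 x s ∈ K := by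
    intro x s hs y _
    by_cases hy : y = x
    · subst hy; rw [Function.update_self]; exact hs
    · rw [Function.update_of_ne hy]; exact hu0mem y
  have hphimin : ∀ (x : V), ∀ s ∈ Set.Icc a (uS x),
      J lam u0 ≤ J lam (Function.update u0 x s) :=
    fun x s hs => hu0min _ (hmemK x s hs)
  -- no touching of the upper barrier
  have hlt_top : ∀ x, u0 x < uS x := by
    intro x
    by_contra hcon
    push_neg at hcon
    have heq : u0 x = uS x := le_antisymm (hu0mem x).2 hcon
    have hupd : Function.update u0 x (uS x) = u0 := by
      rw [← heq]; exact Function.update_eq_self x u0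
    have hd := phi_hasDeriv μ W hWsym c lam h J hJ u0 x (uS x)
    have hD : (∑ y ∈ Finset.univ.erase x, W x y * (uS x - u0 y))
        - (h x + lam) * Real.exp (2 * uS x) * μ x + c * μ x ≤ 0 := by
      refine deriv_nonpos_of_min_right (haS x) hd ?_
      intro s hs
      rw [hupd]
      exact hphimin x s hs
    have hcomp : ∑ y ∈ Finset.univ.erase x, W x y * (uS x - uS y)
        ≤ ∑ y ∈ Finset.univ.erase x, W x y * (uS x - u0 y) := by
      refine Finset.sum_le_sum fun y hy => ?_
      have hyx : y ≠ x := Finset.ne_of_mem_erase hy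
      have hW := (hWpos x y (Ne.symm hyx)).le
      have := (hu0K y (Set.mem_univ y)).2
      nlinarith
    have hLS : ∑ y ∈ Finset.univ.erase x, W x y * (uS x - uS y)
        = μ x * ((h x + lamStar) * Real.exp (2 * uS x) - c) := by
      rw [hLsum uS x, huS x]
    rw [hLS] at hcomp
    have hμx := hμ x
    nlinarith [mul_pos (mul_pos hμx (Real.exp_pos (2 * uS x))) (sub_pos.2 hlamlt)]
  -- no touching of the lower barrier
  have hgt_bot : ∀ x, a < u0 x := by
    intro x
    by_contra hcon
    push_neg at hcon
    have heq : u0 x = a := le_antisymm hcon (hu0mem x).1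
    have hupd : Function.update u0 x a = u0 := by
      rw [← heq]; exact Function.update_eq_self x u0
    have hd := phi_hasDeriv μ W hWsym c lam h J hJ u0 x a
    have hD : 0 ≤ (∑ y ∈ Finset.univ.erase x, W x y * (a - u0 y))
        - (h x + lam) * Real.exp (2 * a) * μ x + c * μ x := by
      refine deriv_nonneg_of_min_left (haS x) hd ?_
      intro s hs
      rw [hupd]
      exact hphimin x s hs
    have hsum_np : ∑ y ∈ Finset.univ.erase x, W x y * (a - u0 y) ≤ 0 := by
      refine Finset.sum_nonpos fun y hy => ?_
      have hyx : y ≠ x := Finset.ne_of_mem_erase hy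
      have hW := (hWpos x y (Ne.symm hyx)).le
      have := (hu0mem y).1
      nlinarith
    have := haB x
    have hμx := hμ x
    nlinarith
  -- u0 is a local minimum
  have hε : (0:ℝ) < Finset.univ.inf' Finset.univ_nonempty
      (fun x => min (u0 x - a) (uS x - u0 x)) := by
    rw [Finset.lt_inf'_iff]
    intro x _
    exact lt_min (by linarith [hgt_bot x]) (by linarith [hlt_top x])
  set ε : ℝ := Finset.univ.inf' Finset.univ_nonempty
      (fun x => min (u0 x - a) (uS x - u0 x)) with hεdef
  have hlocmin : IsLocalMin (J lam) u0 := by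
    filter_upwards [Metric.ball_mem_nhds u0 hε] with v hv
    refine hu0min v ?_
    intro x _
    have h1 : dist (v x) (u0 x) ≤ dist v u0 := dist_le_pi_dist v u0 x
    have h2 : dist v u0 < ε := by rwa [Metric.mem_ball] at hv
    have h3 : ε ≤ min (u0 x - a) (uS x - u0 x) :=
      Finset.inf'_le _ (Finset.mem_univ x)
    have h4 : |v x - u0 x| < min (u0 x - a) (uS x - u0 x) := by
      rw [← Real.dist_eq]; linarith
    have h5 := abs_lt.1 h4
    constructor
    · have := min_le_left (u0 x - a) (uS x - u0 x); linarith
    · have := min_le_right (u0 x - a) (uS x - u0 x); linarith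
  refine ⟨u0, hlocmin, ?_⟩
  intro x
  have hgc : ContinuousAt (fun s : ℝ => Function.update u0 x s) (u0 x) :=
    (continuous_const.update x continuous_id).continuousAt
  have hloc' : IsLocalMin ((J lam) ∘ fun s : ℝ => Function.update u0 x s) (u0 x) := by
    have h0 : IsLocalMin (J lam) (Function.update u0 x (u0 x)) := by
      rwa [Function.update_eq_self]
    exact h0.comp_continuous hgc
  have hd0 : (∑ y ∈ Finset.univ.erase x, W x y * (u0 x - u0 y))
      - (h x + lam) * Real.exp (2 * u0 x) * μ x + c * μ x = 0 :=
    hloc'.hasDerivAt_eq_zero (phi_hasDeriv μ W hWsym c lam h J hJ u0 x (u0 x))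
  rw [hLsum u0 x] at hd0
  have hμx := (hμ x).ne'
  rw [hL]
  rw [hLsum u0 x]
  field_simp
  nlinarith [hμ x, hd0]
end

section
/- Compactness of approximate solutions (Palais–Smale type property): let c < 0 and let f : V → ℝ. If (u_k) is a sequence of functions V → ℝ such that ‖L u_k − f e^{2u_k} + c‖_∞ → 0 as k → ∞, then (u_k) has a subsequence converging uniformly on V to some u : V → ℝ satisfying L u = f e^{2u} − c. -/
set_option maxHeartbeats 1000000

open Finset Filter Real Topology

/-- Palais–Smale type compactness: if `‖L u_k - f e^{2 u_k} + c‖_∞ → 0`,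
then a subsequence of `(u_k)` converges uniformly on `V` to a solution of
`L u = f e^{2u} - c`. -/
theorem stmt_14 {V : Type*} [Fintype V] [Nonempty V] [DecidableEq V]
    (μ : V → ℝ) (hμ : ∀ x, 0 < μ x)
    (W : V → V → ℝ) (hWsym : ∀ x y, W x y = W y x)
    (hWpos : ∀ x y, x ≠ y → 0 < W x y)
    (L : (V → ℝ) → (V → ℝ))
    (hL : ∀ u x, L u x = (1 / μ x) * ∑ y ∈ Finset.univ.erase x, W x y * (u x - u y))
    (c : ℝ) (hc : c < 0) (f : V → ℝ)
    (u : ℕ → V → ℝ)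
    (hps : Filter.Tendsto
      (fun k => Finset.univ.sup' Finset.univ_nonempty
        (fun x => |L (u k) x - f x * Real.exp (2 * u k x) + c|))
      Filter.atTop (nhds 0)) :
    ∃ φ : ℕ → ℕ, StrictMono φ ∧ ∃ v : V → ℝ,
      TendstoUniformly (fun k => u (φ k)) v Filter.atTop ∧
      ∀ x, L v x = f x * Real.exp (2 * v x) - c := by
  classical
  set ε : ℕ → ℝ := fun k => Finset.univ.sup' Finset.univ_nonempty
      (fun x => |L (u k) x - f x * Real.exp (2 * u k x) + c|) with hεdef
  have hbound : ∀ k x, |L (u k) x - f x * Real.exp (2 * u k x) + c| ≤ ε k :=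
    fun k x => Finset.le_sup' (fun x => |L (u k) x - f x * Real.exp (2 * u k x) + c|)
      (Finset.mem_univ x)
  obtain ⟨z₀⟩ := ‹Nonempty V›
  have hne : (Finset.univ : Finset V).Nonempty := Finset.univ_nonempty
  -- constants
  set μmin := Finset.univ.inf' hne μ with hμmindef
  have hμmin_pos : 0 < μmin := by
    rw [hμmindef, Finset.lt_inf'_iff]; exact fun x _ => hμ x
  have hμmin : ∀ x, μmin ≤ μ x := fun x => Finset.inf'_le μ (Finset.mem_univ x)
  set μmax := Finset.univ.sup' hne μ with hμmaxdef
  have hμmax : ∀ x, μ x ≤ μmax := fun x => Finset.le_sup' μ (Finset.mem_univ x)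
  have hμmax_pos : 0 < μmax := lt_of_lt_of_le (hμ z₀) (hμmax z₀)
  set Wm := Finset.univ.sup' hne (fun x => Finset.univ.sup' hne (fun y => |W x y|)) with hWmdef
  have hWm : ∀ x y, |W x y| ≤ Wm := fun x y =>
    le_trans (Finset.le_sup' (fun y => |W x y|) (Finset.mem_univ y))
      (Finset.le_sup' (fun x => Finset.univ.sup' hne (fun y => |W x y|))
        (Finset.mem_univ x))
  have hWm0 : 0 ≤ Wm := le_trans (abs_nonneg _) (hWm z₀ z₀)
  set wgt : V → V → ℝ := fun x y => if x = y then 1 else W x y with hwgtdef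
  set wm := Finset.univ.inf' hne (fun x => Finset.univ.inf' hne (wgt x)) with hwmdef
  have hwm_pos : 0 < wm := by
    rw [hwmdef, Finset.lt_inf'_iff]
    intro x _
    rw [Finset.lt_inf'_iff]
    intro y _
    by_cases h : x = y
    · simp [hwgtdef, h]
    · simpa [hwgtdef, h] using hWpos x y h
  have hwm : ∀ x y, x ≠ y → wm ≤ W x y := by
    intro x y hxy
    have h1 : wm ≤ Finset.univ.inf' hne (wgt x) :=
      Finset.inf'_le (fun x => Finset.univ.inf' hne (wgt x)) (Finset.mem_univ x)
    have h2 : Finset.univ.inf' hne (wgt x) ≤ wgt x y :=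
      Finset.inf'_le (wgt x) (Finset.mem_univ y)
    have : wgt x y = W x y := by simp [hwgtdef, hxy]
    linarith [this ▸ h2]
  set F := Finset.univ.sup' hne (fun x => |f x|) with hFdef
  have hF : ∀ x, |f x| ≤ F := fun x => Finset.le_sup' (fun x => |f x|) (Finset.mem_univ x)
  set n := (Fintype.card V : ℝ) with hndef
  set C₂ := n * Wm / μmin with hC₂def
  have hC₂0 : 0 ≤ C₂ := div_nonneg (mul_nonneg (Nat.cast_nonneg _) hWm0) hμmin_pos.le
  -- sign of L at minimizers / maximizers
  have hLmin : ∀ (w : V → ℝ) (x : V), (∀ y, w x ≤ w y) → L w x ≤ 0 := by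
    intro w x hx
    rw [hL]
    apply mul_nonpos_of_nonneg_of_nonpos
    · exact le_of_lt (div_pos one_pos (hμ x))
    · apply Finset.sum_nonpos
      intro y hy
      have hxy : x ≠ y := fun h => (Finset.ne_of_mem_erase hy) h.symm
      exact mul_nonpos_of_nonneg_of_nonpos (le_of_lt (hWpos x y hxy)) (by linarith [hx y])
  have hLmax : ∀ (w : V → ℝ) (x : V), (∀ y, w y ≤ w x) → 0 ≤ L w x := by
    intro w x hx
    rw [hL]
    apply mul_nonneg
    · exact le_of_lt (div_pos one_pos (hμ x))
    · apply Finset.sum_nonneg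
      intro y hy
      have hxy : x ≠ y := fun h => (Finset.ne_of_mem_erase hy) h.symm
      exact mul_nonneg (le_of_lt (hWpos x y hxy)) (by linarith [hx y])
  -- global bound on |L w x| in terms of oscillation
  have hLbound : ∀ (w : V → ℝ) (x : V) (m M : ℝ), (∀ y, m ≤ w y) → (∀ y, w y ≤ M) →
      |L w x| ≤ C₂ * (M - m) := by
    intro w x m M hm hM
    have hmM : m ≤ M := le_trans (hm x) (hM x)
    rw [hL, abs_mul]
    have h1 : |1 / μ x| = 1 / μ x := abs_of_pos (div_pos one_pos (hμ x))
    have habs : |∑ y ∈ Finset.univ.erase x, W x y * (w x - w y)| ≤ n * (Wm * (M - m)) := by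
      refine le_trans (Finset.abs_sum_le_sum_abs _ _) ?_
      refine le_trans (Finset.sum_le_card_nsmul _ _ (Wm * (M - m)) ?_) ?_
      · intro y hy
        rw [abs_mul]
        refine mul_le_mul (hWm x y) ?_ (abs_nonneg _) hWm0
        rw [abs_le]
        constructor <;> [linarith [hm x, hM y]; linarith [hM x, hm y]]
      · rw [nsmul_eq_mul]
        have hcard : ((Finset.univ.erase x).card : ℝ) ≤ n := by
          rw [hndef]
          exact_mod_cast Finset.card_le_card (Finset.erase_subset _ _) |>.trans
            (le_of_eq (Finset.card_univ))
        have h0 : (0:ℝ) ≤ Wm * (M - m) := mul_nonneg hWm0 (by linarith only [hmM])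
        exact mul_le_mul_of_nonneg_right hcard h0
    calc |1 / μ x| * |∑ y ∈ Finset.univ.erase x, W x y * (w x - w y)|
        ≤ (1 / μmin) * (n * (Wm * (M - m))) := by
          rw [h1]
          refine mul_le_mul ?_ habs (abs_nonneg _) (le_of_lt (div_pos one_pos hμmin_pos))
          exact one_div_le_one_div_of_le hμmin_pos (hμmin x)
      _ = C₂ * (M - m) := by rw [hC₂def]; field_simp
  -- lower bound on L at the maximizer in terms of oscillation
  have hLmax_osc : ∀ (w : V → ℝ) (x₀ x₁ : V), (∀ y, w y ≤ w x₀) → (∀ y, w x₁ ≤ w y) →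
      (wm / μmax) * (w x₀ - w x₁) ≤ L w x₀ := by
    intro w x₀ x₁ hM hm
    by_cases hx : x₀ = x₁
    · have h0 : w x₀ - w x₁ = 0 := by rw [hx]; ring
      rw [h0, mul_zero]
      exact hLmax w x₀ hM
    · rw [hL]
      have hmem : x₁ ∈ Finset.univ.erase x₀ :=
        Finset.mem_erase.mpr ⟨fun h => hx h.symm, Finset.mem_univ _⟩
      have hosc0 : 0 ≤ w x₀ - w x₁ := by linarith [hm x₀]
      have hsum : W x₀ x₁ * (w x₀ - w x₁) ≤
          ∑ y ∈ Finset.univ.erase x₀, W x₀ y * (w x₀ - w y) := by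
        refine Finset.single_le_sum (f := fun y => W x₀ y * (w x₀ - w y)) (fun y hy => ?_) hmem
        have hxy : x₀ ≠ y := fun h => (Finset.ne_of_mem_erase hy) h.symm
        exact mul_nonneg (le_of_lt (hWpos x₀ y hxy)) (by linarith [hM y])
      have h1 : wm * (w x₀ - w x₁) ≤ W x₀ x₁ * (w x₀ - w x₁) :=
        mul_le_mul_of_nonneg_right (hwm x₀ x₁ hx) hosc0
      have h2 : wm * (w x₀ - w x₁) ≤ ∑ y ∈ Finset.univ.erase x₀, W x₀ y * (w x₀ - w y) :=
        le_trans h1 hsum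
      have h3 : (1 / μmax) * (wm * (w x₀ - w x₁)) ≤
          (1 / μ x₀) * ∑ y ∈ Finset.univ.erase x₀, W x₀ y * (w x₀ - w y) := by
        refine mul_le_mul ?_ h2 (mul_nonneg hwm_pos.le hosc0)
          (le_of_lt (div_pos one_pos (hμ x₀)))
        exact one_div_le_one_div_of_le (hμ x₀) (hμmax x₀)
      calc (wm / μmax) * (w x₀ - w x₁) = (1 / μmax) * (wm * (w x₀ - w x₁)) := by ring
        _ ≤ _ := h3
  -- threshold
  have hε0 : 0 < min 1 (-c/2) := lt_min one_pos (by linarith)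
  obtain ⟨N, hN⟩ : ∃ N, ∀ k ≥ N, ε k ≤ min 1 (-c/2) := by
    obtain ⟨N, hN⟩ := (Metric.tendsto_atTop.mp hps) (min 1 (-c/2)) hε0
    refine ⟨N, fun k hk => ?_⟩
    have := hN k hk
    rw [Real.dist_eq, sub_zero] at this
    exact le_of_lt (lt_of_le_of_lt (le_abs_self _) this)
  -- f takes a negative value
  have hfneg : ∃ x, f x < 0 := by
    obtain ⟨x₁, -, hx₁⟩ := Finset.exists_min_image Finset.univ (u N) hne
    have h1 : L (u N) x₁ ≤ 0 := hLmin _ _ (fun y => hx₁ y (Finset.mem_univ y))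
    have h2 := abs_le.mp (hbound N x₁)
    have h3 : ε N ≤ -c/2 := le_trans (hN N le_rfl) (min_le_right _ _)
    have h4 : f x₁ * Real.exp (2 * u N x₁) ≤ c/2 := by linarith [h2.1]
    refine ⟨x₁, ?_⟩
    by_contra h
    push_neg at h
    have h5 : 0 ≤ f x₁ * Real.exp (2 * u N x₁) :=
      mul_nonneg h (le_of_lt (Real.exp_pos _))
    linarith only [h4, h5, hc]
  set S := Finset.univ.filter (fun x => f x < 0) with hSdef
  have hSne : S.Nonempty := ⟨hfneg.choose, by simp [hSdef, hfneg.choose_spec]⟩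
  set δ := S.inf' hSne (fun x => -f x) with hδdef
  have hδpos : 0 < δ := by
    rw [hδdef, Finset.lt_inf'_iff]
    intro x hx
    rw [hSdef, Finset.mem_filter] at hx
    linarith [hx.2]
  have hδ : ∀ x, f x < 0 → δ ≤ -f x := fun x hx =>
    Finset.inf'_le (fun x => -f x) (by simp [hSdef, hx])
  have hFpos : 0 < F := by
    obtain ⟨x, hx⟩ := hfneg
    have : -f x ≤ |f x| := neg_le_abs _
    linarith [hδ x hx, hF x]
  set δp := Finset.univ.inf' hne (fun x => if 0 < f x then f x else F + 1) with hδpdef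
  have hδp_pos : 0 < δp := by
    rw [hδpdef, Finset.lt_inf'_iff]
    intro x _
    by_cases h : 0 < f x
    · simpa [h] using h
    · simp only [h, if_false]
      linarith
  have hδp : ∀ x, 0 < f x → δp ≤ f x := by
    intro x hx
    have h := Finset.inf'_le (fun x => if 0 < f x then f x else F + 1) (Finset.mem_univ x)
    rw [hδpdef]
    rw [if_pos hx] at h; exact h
  -- the main bound
  set m₀ := Real.log (-c / (2*F)) / 2 with hm₀def
  set K := (μmax / wm) * (-c + 1) with hKdef
  have hK0 : 0 ≤ K := mul_nonneg (div_nonneg hμmax_pos.le hwm_pos.le) (by linarith)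
  set A := (C₂ * K - c + 1) / δ with hAdef
  set B₁ := Real.log A / 2 + K with hB₁def
  set a := C₂ / δp with hadef
  set b := (-(C₂ * m₀) + 1) / δp with hbdef
  set B₂ := max 1 (a + |b|) with hB₂def
  set B := max B₁ B₂ with hBdef
  have hmain : ∀ k, ε k ≤ min 1 (-c/2) → ∀ x, m₀ ≤ u k x ∧ u k x ≤ B := by
    intro k hk
    obtain ⟨x₁, -, hx₁⟩ := Finset.exists_min_image Finset.univ (u k) hne
    obtain ⟨x₀, -, hx₀⟩ := Finset.exists_max_image Finset.univ (u k) hne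
    have hm : ∀ y, u k x₁ ≤ u k y := fun y => hx₁ y (Finset.mem_univ y)
    have hM : ∀ y, u k y ≤ u k x₀ := fun y => hx₀ y (Finset.mem_univ y)
    have hε1 : ε k ≤ 1 := le_trans hk (min_le_left _ _)
    have hε2 : ε k ≤ -c/2 := le_trans hk (min_le_right _ _)
    have hmin_eq := abs_le.mp (hbound k x₁)
    have hmax_eq := abs_le.mp (hbound k x₀)
    have hL1 : L (u k) x₁ ≤ 0 := hLmin _ _ hm
    have hL0 : 0 ≤ L (u k) x₀ := hLmax _ _ hM
    have hfm : f x₁ * Real.exp (2 * u k x₁) ≤ c / 2 := by linarith [hmin_eq.1]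
    have hfx₁ : f x₁ < 0 := by
      by_contra h
      push_neg at h
      have h5 : 0 ≤ f x₁ * Real.exp (2 * u k x₁) :=
        mul_nonneg h (le_of_lt (Real.exp_pos _))
      linarith only [hfm, h5, hc]
    have hδx₁ : δ ≤ -f x₁ := hδ x₁ hfx₁
    have hfx₁F : -f x₁ ≤ F := le_trans (neg_le_abs _) (hF x₁)
    have hem : -c / (2 * F) ≤ Real.exp (2 * u k x₁) := by
      rw [div_le_iff₀ (by linarith : (0:ℝ) < 2 * F)]
      have hh := mul_le_mul_of_nonneg_right hfx₁F (le_of_lt (Real.exp_pos (2 * u k x₁)))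
      linarith
    have hm₀ : m₀ ≤ u k x₁ := by
      have h1 : Real.log (-c/(2*F)) ≤ Real.log (Real.exp (2 * u k x₁)) :=
        Real.log_le_log (by apply div_pos <;> linarith) hem
      rw [Real.log_exp] at h1
      rw [hm₀def]
      linarith
    have hosc0 : 0 ≤ u k x₀ - u k x₁ := by linarith [hm x₀]
    have hMB : u k x₀ ≤ B := by
      rcases le_or_gt (f x₀) 0 with hcase | hcase
      · -- f nonpositive at the max point
        have hfe0 : f x₀ * Real.exp (2 * u k x₀) ≤ 0 :=
          mul_nonpos_of_nonpos_of_nonneg hcase (le_of_lt (Real.exp_pos _))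
        have hL0' : L (u k) x₀ ≤ -c + 1 := by linarith [hmax_eq.2]
        have hosc : u k x₀ - u k x₁ ≤ K := by
          have h := hLmax_osc (u k) x₀ x₁ hM hm
          have h2 : (μmax/wm) * ((wm/μmax) * (u k x₀ - u k x₁)) ≤ (μmax/wm) * (-c + 1) :=
            mul_le_mul_of_nonneg_left (by linarith) (by positivity)
          have h3 : (μmax/wm) * ((wm/μmax) * (u k x₀ - u k x₁)) = u k x₀ - u k x₁ := by
            field_simp
          rw [hKdef]
          linarith
        have hLm : -(C₂ * (u k x₀ - u k x₁)) ≤ L (u k) x₁ :=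
          (abs_le.mp (hLbound (u k) x₁ (u k x₁) (u k x₀) hm hM)).1
        have hCK : C₂ * (u k x₀ - u k x₁) ≤ C₂ * K :=
          mul_le_mul_of_nonneg_left hosc hC₂0
        have hfm2 : -(C₂ * K) + c - 1 ≤ f x₁ * Real.exp (2 * u k x₁) := by
          linarith [hmin_eq.2]
        have hem2 : Real.exp (2 * u k x₁) ≤ A := by
          rw [hAdef, le_div_iff₀ hδpos]
          have hh := mul_le_mul_of_nonneg_right hδx₁ (le_of_lt (Real.exp_pos (2 * u k x₁)))
          linarith
        have hmA : u k x₁ ≤ Real.log A / 2 := by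
          have hA : 0 < A := lt_of_lt_of_le (Real.exp_pos _) hem2
          have h1 : Real.log (Real.exp (2 * u k x₁)) ≤ Real.log A :=
            Real.log_le_log (Real.exp_pos _) hem2
          rw [Real.log_exp] at h1
          linarith
        calc u k x₀ = u k x₁ + (u k x₀ - u k x₁) := by ring
          _ ≤ Real.log A / 2 + K := add_le_add hmA hosc
          _ = B₁ := by rw [hB₁def]
          _ ≤ B := le_max_left _ _
      · -- f positive at the max point
        have h1 : δp ≤ f x₀ := hδp x₀ hcase
        have hLub : L (u k) x₀ ≤ C₂ * (u k x₀ - u k x₁) :=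
          (abs_le.mp (hLbound (u k) x₀ (u k x₁) (u k x₀) hm hM)).2
        have h2 : f x₀ * Real.exp (2 * u k x₀) ≤ C₂ * (u k x₀ - m₀) + 1 := by
          have h3 : C₂ * (u k x₀ - u k x₁) ≤ C₂ * (u k x₀ - m₀) :=
            mul_le_mul_of_nonneg_left (by linarith) hC₂0
          linarith [hmax_eq.1]
        have h3 : δp * Real.exp (2 * u k x₀) ≤ C₂ * u k x₀ - C₂ * m₀ + 1 := by
          have hh := mul_le_mul_of_nonneg_right h1 (le_of_lt (Real.exp_pos (2 * u k x₀)))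
          linarith only [hh, h2]
        have h4 : Real.exp (2 * u k x₀) ≤ a * u k x₀ + b := by
          have heq : a * u k x₀ + b = (C₂ * u k x₀ - C₂ * m₀ + 1) / δp := by
            rw [hadef, hbdef]
            field_simp
            ring
          rw [heq, le_div_iff₀ hδp_pos]
          linarith only [h3]
        have hMle : u k x₀ ≤ B₂ := by
          rw [hB₂def]
          by_contra hMg
          push_neg at hMg
          have hM1 : 1 < u k x₀ := lt_of_le_of_lt (le_max_left _ _) hMg
          have hMab : a + |b| < u k x₀ := lt_of_le_of_lt (le_max_right _ _) hMg
          have hexpM : 1 + u k x₀ ≤ Real.exp (u k x₀) := by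
            have := Real.add_one_le_exp (u k x₀)
            linarith only [this]
          have hsq : (1 + u k x₀)^2 ≤ Real.exp (2 * u k x₀) := by
            rw [show (2:ℝ) * u k x₀ = u k x₀ + u k x₀ by ring, Real.exp_add]
            have h9 := mul_le_mul hexpM hexpM (by linarith only [hM1])
              (le_of_lt (Real.exp_pos (u k x₀)))
            linarith only [h9]
          have habs_b : b ≤ |b| := le_abs_self b
          have ha0 : 0 ≤ a := by positivity
          have h10 := mul_pos (by linarith only [hMab] : (0:ℝ) < u k x₀ - (a + |b|))
            (by linarith only [hM1] : (0:ℝ) < u k x₀)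
          have h11 := mul_nonneg (abs_nonneg b)
            (by linarith only [hM1] : (0:ℝ) ≤ u k x₀ - 1)
          linarith only [hsq, h4, h10, h11, habs_b, hM1]
        exact le_trans hMle (le_max_right _ _)
    exact fun x => ⟨le_trans hm₀ (hm x), le_trans (hM x) hMB⟩
  -- uniform bound, compactness extraction
  set R := max |m₀| |B| with hRdef
  have hR0 : 0 ≤ R := le_trans (abs_nonneg _) (le_max_left _ _)
  have hball : ∀ j, u (N + j) ∈ Metric.closedBall (0 : V → ℝ) R := by
    intro j
    rw [Metric.mem_closedBall, dist_pi_le_iff hR0]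
    intro x
    rw [Real.dist_eq, Pi.zero_apply, sub_zero]
    obtain ⟨h1, h2⟩ := hmain (N + j) (hN (N + j) (Nat.le_add_right N j)) x
    rw [abs_le]
    constructor
    · calc -R ≤ -|m₀| := neg_le_neg (le_max_left _ _)
        _ ≤ m₀ := neg_abs_le _
        _ ≤ u (N + j) x := h1
    · exact le_trans h2 (le_trans (le_abs_self B) (le_max_right _ _))
  obtain ⟨v, -, ψ, hψmono, hψconv⟩ :=
    (isCompact_closedBall (0 : V → ℝ) R).tendsto_subseq hball
  have hφmono : StrictMono (fun j => N + ψ j) :=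
    fun i j hij => Nat.add_lt_add_left (hψmono hij) N
  have hpt : ∀ x, Tendsto (fun j => u (N + ψ j) x) atTop (𝓝 (v x)) := by
    intro x
    have h := tendsto_pi_nhds.mp hψconv x
    exact h
  refine ⟨fun j => N + ψ j, hφmono, v, ?_, ?_⟩
  · -- uniform convergence
    rw [Metric.tendstoUniformly_iff]
    intro εu hεu
    refine Filter.eventually_all.mpr fun x => ?_
    have h := Metric.tendsto_nhds.mp (hpt x) εu hεu
    filter_upwards [h] with j hj
    rw [dist_comm] at hj
    exact hj
  · -- limit equation
    intro x
    have hLconv : Tendsto (fun j => L (u (N + ψ j)) x) atTop (𝓝 (L v x)) := by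
      simp only [hL]
      apply Tendsto.mul tendsto_const_nhds
      apply tendsto_finset_sum
      intro y _
      exact Tendsto.mul tendsto_const_nhds ((hpt x).sub (hpt y))
    have hfconv : Tendsto (fun j => f x * Real.exp (2 * u (N + ψ j) x)) atTop
        (𝓝 (f x * Real.exp (2 * v x))) :=
      Tendsto.mul tendsto_const_nhds
        ((Real.continuous_exp.tendsto _).comp (Tendsto.mul tendsto_const_nhds (hpt x)))
    have hzero : Tendsto
        (fun j => L (u (N + ψ j)) x - f x * Real.exp (2 * u (N + ψ j) x) + c)
        atTop (𝓝 0) := by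
      refine squeeze_zero_norm (a := fun j => ε (N + ψ j)) (fun j => ?_)
        (hps.comp hφmono.tendsto_atTop)
      simpa [Real.norm_eq_abs] using hbound (N + ψ j) x
    have hlim : Tendsto
        (fun j => L (u (N + ψ j)) x - f x * Real.exp (2 * u (N + ψ j) x) + c)
        atTop (𝓝 (L v x - f x * Real.exp (2 * v x) + c)) :=
      (hLconv.sub hfconv).add_const c
    have := tendsto_nhds_unique hlim hzero
    linarith
end
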